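/- arXiv:1404.6679 — 9 statements merged into one kernel-verified Lean document; each statement's English description precedes it below -/
import Mathlib

section
/- The number of semistandard Young tableaux with two columns of lengths r ≥ k ≥ 0 and entries at most m (with m ≥ r) equals ((r-k+1)/(r+1)) * C(m, r) * C(m+1, k). -/
section
variable {m n n1 n2 : ℕ}

private def ex (m : ℕ) {n : ℕ} (f : Fin n → Fin m) : ℕ → ℕ :=
  fun j => if h : j < n then (f ⟨j, h⟩ : ℕ) else m + j

private lemma ex_eq (f : Fin n → Fin m) {j : ℕ} (h : j < n) : ex m f j = f ⟨j, h⟩ := dif_pos h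

private lemma ex_lt (f : Fin n → Fin m) {j : ℕ} (h : j < n) : ex m f j < m := by
  rw [ex_eq f h]; exact (f ⟨j, h⟩).2

private lemma ex_mono {f : Fin n → Fin m} (hf : StrictMono f) : StrictMono (ex m f) := by
  intro a b hab
  unfold ex
  split_ifs with ha hb hb
  · exact hf (by simpa [Fin.lt_def] using hab)
  · exact lt_of_lt_of_le (f ⟨a, ha⟩).2 (by omega)
  · exact absurd hab (by omega)
  · omega

private def toFin (n m : ℕ) (X : ℕ → ℕ) (h : ∀ j, j < n → X j < m) : Fin n → Fin m :=
  fun j => ⟨X j, h j j.2⟩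

private lemma toFin_mono {X : ℕ → ℕ} {h : ∀ j, j < n → X j < m}
    (h2 : ∀ a b : ℕ, a < b → b < n → X a < X b) : StrictMono (toFin n m X h) := by
  intro a b hab
  exact h2 a b hab b.2

private lemma ex_toFin {X : ℕ → ℕ} {h : ∀ j, j < n → X j < m} {j : ℕ} (hj : j < n) :
    ex m (toFin n m X h) j = X j := by
  rw [ex_eq _ hj]; rfl

private def sw1 (i : ℕ) (X Y : ℕ → ℕ) : ℕ → ℕ := fun j => if j ≤ i then X j else Y (j - 1)
private def sw2 (i : ℕ) (X Y : ℕ → ℕ) : ℕ → ℕ := fun j => if j < i then Y j else X (j + 1)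

private lemma sw1_le {i j : ℕ} (X Y : ℕ → ℕ) (h : j ≤ i) : sw1 i X Y j = X j := if_pos h
private lemma sw1_gt {i j : ℕ} (X Y : ℕ → ℕ) (h : ¬ j ≤ i) : sw1 i X Y j = Y (j - 1) := if_neg h
private lemma sw2_lt {i j : ℕ} (X Y : ℕ → ℕ) (h : j < i) : sw2 i X Y j = Y j := if_pos h
private lemma sw2_ge {i j : ℕ} (X Y : ℕ → ℕ) (h : ¬ j < i) : sw2 i X Y j = X (j + 1) := if_neg h

private lemma sw1_bound {X Y : ℕ → ℕ} {i : ℕ}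
    (hX : ∀ j, j < n2 → X j < m) (hY : ∀ j, j < n1 → Y j < m) (hi : i < n2) :
    ∀ j, j < n1 + 1 → sw1 i X Y j < m := by
  intro j hj
  unfold sw1
  split_ifs with h
  · exact hX j (by omega)
  · exact hY (j - 1) (by omega)

private lemma sw1_mono {X Y : ℕ → ℕ} {i : ℕ}
    (hX : ∀ a b, a < b → b < n2 → X a < X b) (hY : ∀ a b, a < b → b < n1 → Y a < Y b)
    (hi : i < n2) (hseam : i < n1 → X i < Y i) :
    ∀ a b, a < b → b < n1 + 1 → sw1 i X Y a < sw1 i X Y b := by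
  intro a b hab hb
  unfold sw1
  split_ifs with ha hb2 hb2
  · exact hX a b hab (by omega)
  · have h1 : X a ≤ X i := by
      rcases eq_or_lt_of_le ha with h | h
      · rw [h]
      · exact (hX a i h hi).le
    have h2 : X i < Y i := hseam (by omega)
    have h3 : Y i ≤ Y (b - 1) := by
      rcases eq_or_lt_of_le (show i ≤ b - 1 by omega) with h | h
      · rw [h]
      · exact (hY i (b - 1) h (by omega)).le
    omega
  · exact absurd hab (by omega)
  · exact hY (a - 1) (b - 1) (by omega) (by omega)

private lemma sw2_bound {X Y : ℕ → ℕ} {i : ℕ}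
    (hX : ∀ j, j < n2 → X j < m) (hY : ∀ j, j < n1 → Y j < m) (hi : i ≤ n1) :
    ∀ j, j < n2 - 1 → sw2 i X Y j < m := by
  intro j hj
  unfold sw2
  split_ifs with h
  · exact hY j (by omega)
  · exact hX (j + 1) (by omega)

private lemma sw2_mono {X Y : ℕ → ℕ} {i : ℕ}
    (hX : ∀ a b, a < b → b < n2 → X a < X b) (hY : ∀ a b, a < b → b < n1 → Y a < Y b)
    (hi : i ≤ n1) (hmin : ∀ j, j < i → Y j ≤ X j) :
    ∀ a b, a < b → b < n2 - 1 → sw2 i X Y a < sw2 i X Y b := by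
  intro a b hab hb
  unfold sw2
  split_ifs with ha hb2 hb2
  · exact hY a b hab (by omega)
  · have h1 : Y a ≤ Y (i - 1) := by
      rcases eq_or_lt_of_le (show a ≤ i - 1 by omega) with h | h
      · rw [h]
      · exact (hY a (i - 1) h (by omega)).le
    have h2 : Y (i - 1) ≤ X (i - 1) := hmin (i - 1) (by omega)
    have h3 : X (i - 1) < X (b + 1) := hX (i - 1) (b + 1) (by omega) (by omega)
    omega
  · exact absurd hab (by omega)
  · exact hX (a + 1) (b + 1) (by omega) (by omega)

end

section
variable {r k m : ℕ}

private abbrev BadT (r k m : ℕ) := {p : (Fin r → Fin m) × (Fin k → Fin m) //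
    StrictMono p.1 ∧ StrictMono p.2 ∧ ∃ j, j < k ∧ ex m p.2 j < ex m p.1 j}

private abbrev ChT (r k m : ℕ) := {q : (Fin (r+1) → Fin m) × (Fin (k-1) → Fin m) //
    StrictMono q.1 ∧ StrictMono q.2}

private def fidx (p : BadT r k m) : ℕ := Nat.find p.2.2.2

private lemma fidx_lt (p : BadT r k m) : fidx p < k := (Nat.find_spec p.2.2.2).1

private lemma fidx_seam (p : BadT r k m) :
    ex m p.1.2 (fidx p) < ex m p.1.1 (fidx p) := (Nat.find_spec p.2.2.2).2

private lemma fidx_min (p : BadT r k m) {j : ℕ} (hj : j < fidx p) :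
    ex m p.1.1 j ≤ ex m p.1.2 j :=
  le_of_not_gt fun hc => Nat.find_min p.2.2.2 hj ⟨hj.trans (fidx_lt p), hc⟩

private def bidx (q : ChT r k m) : ℕ :=
  if h : ∃ j, j < k - 1 ∧ ex m q.1.1 j < ex m q.1.2 j then Nat.find h else k - 1

private lemma bidx_le (q : ChT r k m) : bidx q ≤ k - 1 := by
  unfold bidx
  split_ifs with h
  · exact (Nat.find_spec h).1.le
  · exact le_rfl

private lemma bidx_seam (q : ChT r k m) (h : bidx q < k - 1) :
    ex m q.1.1 (bidx q) < ex m q.1.2 (bidx q) := by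
  unfold bidx at *
  split_ifs at h ⊢ with h2
  · exact (Nat.find_spec h2).2
  · omega

private lemma bidx_min (q : ChT r k m) {j : ℕ} (hj : j < bidx q) :
    ex m q.1.2 j ≤ ex m q.1.1 j := by
  unfold bidx at hj
  split_ifs at hj with h2
  · exact le_of_not_gt fun hc => Nat.find_min h2 hj ⟨by have := (Nat.find_spec h2).1; omega, hc⟩
  · exact le_of_not_gt fun hc => h2 ⟨j, by omega, hc⟩

private def fwdC (hkr : k ≤ r) (p : BadT r k m) : Fin (r+1) → Fin m :=
  toFin (r+1) m (sw1 (fidx p) (ex m p.1.2) (ex m p.1.1))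
    (sw1_bound (fun j hj => ex_lt _ hj) (fun j hj => ex_lt _ hj) (fidx_lt p))

private def fwdD (hkr : k ≤ r) (p : BadT r k m) : Fin (k-1) → Fin m :=
  toFin (k-1) m (sw2 (fidx p) (ex m p.1.2) (ex m p.1.1))
    (sw2_bound (fun j hj => ex_lt _ hj) (fun j hj => ex_lt _ hj) ((fidx_lt p).le.trans hkr))

private lemma fwdC_mono (hkr : k ≤ r) (p : BadT r k m) : StrictMono (fwdC hkr p) :=
  toFin_mono (sw1_mono (fun a b h _ => ex_mono p.2.2.1 h) (fun a b h _ => ex_mono p.2.1 h)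
    (fidx_lt p) (fun _ => fidx_seam p))

private lemma fwdD_mono (hkr : k ≤ r) (p : BadT r k m) : StrictMono (fwdD hkr p) :=
  toFin_mono (sw2_mono (fun a b h _ => ex_mono p.2.2.1 h) (fun a b h _ => ex_mono p.2.1 h)
    ((fidx_lt p).le.trans hkr) (fun j hj => fidx_min p hj))

private def fwd (hkr : k ≤ r) (p : BadT r k m) : ChT r k m :=
  ⟨(fwdC hkr p, fwdD hkr p), fwdC_mono hkr p, fwdD_mono hkr p⟩

private def bwdF (hk1 : 1 ≤ k) (hkr : k ≤ r) (q : ChT r k m) : Fin r → Fin m :=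
  toFin r m (sw2 (bidx q) (ex m q.1.1) (ex m q.1.2))
    (fun j hj => sw2_bound (fun j hj => ex_lt _ hj) (fun j hj => ex_lt _ hj)
      (bidx_le q) j (by omega))

private def bwdG (hk1 : 1 ≤ k) (hkr : k ≤ r) (q : ChT r k m) : Fin k → Fin m :=
  toFin k m (sw1 (bidx q) (ex m q.1.1) (ex m q.1.2))
    (fun j hj => sw1_bound (n1 := k - 1) (fun j hj => ex_lt _ hj) (fun j hj => ex_lt _ hj)
      (show bidx q < r + 1 by have := bidx_le q; omega) j (by omega))

private lemma bwdF_mono (hk1 : 1 ≤ k) (hkr : k ≤ r) (q : ChT r k m) :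
    StrictMono (bwdF hk1 hkr q) := by
  apply toFin_mono
  intro a b hab hb
  exact sw2_mono (n2 := r + 1) (fun a b h _ => ex_mono q.2.1 h) (fun a b h _ => ex_mono q.2.2 h)
    (bidx_le q) (fun j hj => bidx_min q hj) a b hab (by omega)

private lemma bwdG_mono (hk1 : 1 ≤ k) (hkr : k ≤ r) (q : ChT r k m) :
    StrictMono (bwdG hk1 hkr q) := by
  apply toFin_mono
  intro a b hab hb
  exact sw1_mono (n1 := k - 1) (n2 := r + 1) (fun a b h _ => ex_mono q.2.1 h) (fun a b h _ => ex_mono q.2.2 h)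
    (show bidx q < r + 1 by have := bidx_le q; omega) (fun h => bidx_seam q h) a b hab (by omega)

private lemma bwd_bad (hk1 : 1 ≤ k) (hkr : k ≤ r) (q : ChT r k m) :
    ∃ j, j < k ∧ ex m (bwdG hk1 hkr q) j < ex m (bwdF hk1 hkr q) j := by
  refine ⟨bidx q, by have := bidx_le q; omega, ?_⟩
  unfold bwdF bwdG
  rw [ex_toFin (show bidx q < k by have := bidx_le q; omega),
    ex_toFin (show bidx q < r by have := bidx_le q; omega),
    sw1_le _ _ le_rfl, sw2_ge _ _ (lt_irrefl _)]
  exact ex_mono q.2.1 (by omega)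

private def bwd (hk1 : 1 ≤ k) (hkr : k ≤ r) (q : ChT r k m) : BadT r k m :=
  ⟨(bwdF hk1 hkr q, bwdG hk1 hkr q), bwdF_mono hk1 hkr q, bwdG_mono hk1 hkr q,
    bwd_bad hk1 hkr q⟩


private lemma fwd_ex1 (hkr : k ≤ r) (p : BadT r k m) {j : ℕ} (hj : j < r + 1) :
    ex m (fwd hkr p).1.1 j = sw1 (fidx p) (ex m p.1.2) (ex m p.1.1) j := by
  show ex m (fwdC hkr p) j = _
  unfold fwdC
  exact ex_toFin hj

private lemma fwd_ex2 (hkr : k ≤ r) (p : BadT r k m) {j : ℕ} (hj : j < k - 1) :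
    ex m (fwd hkr p).1.2 j = sw2 (fidx p) (ex m p.1.2) (ex m p.1.1) j := by
  show ex m (fwdD hkr p) j = _
  unfold fwdD
  exact ex_toFin hj

private lemma bwd_ex1 (hk1 : 1 ≤ k) (hkr : k ≤ r) (q : ChT r k m) {j : ℕ} (hj : j < r) :
    ex m (bwd hk1 hkr q).1.1 j = sw2 (bidx q) (ex m q.1.1) (ex m q.1.2) j := by
  show ex m (bwdF hk1 hkr q) j = _
  unfold bwdF
  exact ex_toFin hj

private lemma bwd_ex2 (hk1 : 1 ≤ k) (hkr : k ≤ r) (q : ChT r k m) {j : ℕ} (hj : j < k) :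
    ex m (bwd hk1 hkr q).1.2 j = sw1 (bidx q) (ex m q.1.1) (ex m q.1.2) j := by
  show ex m (bwdG hk1 hkr q) j = _
  unfold bwdG
  exact ex_toFin hj

private lemma bidx_fwd (hk1 : 1 ≤ k) (hkr : k ≤ r) (p : BadT r k m) :
    bidx (fwd hkr p) = fidx p := by
  have hik : fidx p < k := fidx_lt p
  by_cases h1 : fidx p < k - 1
  · have hex : ∃ j, j < k - 1 ∧ ex m (fwd hkr p).1.1 j < ex m (fwd hkr p).1.2 j := by
      refine ⟨fidx p, h1, ?_⟩
      rw [fwd_ex1 hkr p (by omega), fwd_ex2 hkr p h1, sw1_le _ _ le_rfl,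
        sw2_ge _ _ (lt_irrefl _)]
      exact ex_mono p.2.2.1 (by omega)
    unfold bidx
    rw [dif_pos hex, Nat.find_eq_iff]
    refine ⟨⟨h1, ?_⟩, ?_⟩
    · rw [fwd_ex1 hkr p (by omega), fwd_ex2 hkr p h1, sw1_le _ _ le_rfl,
        sw2_ge _ _ (lt_irrefl _)]
      exact ex_mono p.2.2.1 (by omega)
    · rintro n hn ⟨hn1, hlt⟩
      rw [fwd_ex1 hkr p (by omega), fwd_ex2 hkr p hn1, sw1_le _ _ (by omega),
        sw2_lt _ _ hn] at hlt
      exact absurd hlt (not_lt.2 (fidx_min p hn))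
  · have hik2 : fidx p = k - 1 := by omega
    have hex : ¬ ∃ j, j < k - 1 ∧ ex m (fwd hkr p).1.1 j < ex m (fwd hkr p).1.2 j := by
      rintro ⟨j, hj1, hlt⟩
      rw [fwd_ex1 hkr p (by omega), fwd_ex2 hkr p hj1, sw1_le _ _ (by omega),
        sw2_lt _ _ (by omega)] at hlt
      exact absurd hlt (not_lt.2 (fidx_min p (by omega)))
    unfold bidx
    rw [dif_neg hex, hik2]

private lemma fidx_bwd (hk1 : 1 ≤ k) (hkr : k ≤ r) (q : ChT r k m) :
    fidx (bwd hk1 hkr q) = bidx q := by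
  have hb := bidx_le q
  unfold fidx
  rw [Nat.find_eq_iff]
  constructor
  · refine ⟨by omega, ?_⟩
    rw [bwd_ex1 hk1 hkr q (show bidx q < r by omega), bwd_ex2 hk1 hkr q (by omega),
      sw1_le _ _ le_rfl, sw2_ge _ _ (lt_irrefl _)]
    exact ex_mono q.2.1 (by omega)
  · rintro n hn ⟨hn1, hlt⟩
    rw [bwd_ex1 hk1 hkr q (by omega), bwd_ex2 hk1 hkr q (by omega),
      sw1_le _ _ (by omega), sw2_lt _ _ hn] at hlt
    exact absurd hlt (not_lt.2 (bidx_min q hn))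

private lemma bad_card (hk1 : 1 ≤ k) (hkr : k ≤ r) :
    Nat.card (BadT r k m) = Nat.card (ChT r k m) := by
  apply Nat.card_congr
  refine ⟨fwd hkr, bwd hk1 hkr, ?_, ?_⟩
  · intro p
    have hi := bidx_fwd hk1 hkr p
    apply Subtype.ext
    apply Prod.ext
    · funext j
      apply Fin.ext
      show sw2 (bidx (fwd hkr p)) (ex m (fwd hkr p).1.1) (ex m (fwd hkr p).1.2) (j : ℕ)
        = (p.1.1 j : ℕ)
      rw [hi]
      rcases lt_or_ge (j : ℕ) (fidx p) with h | h
      · rw [sw2_lt _ _ h, fwd_ex2 hkr p (show (j:ℕ) < k - 1 by have := fidx_lt p; omega),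
          sw2_lt _ _ h, ex_eq p.1.1 j.2]
      · rw [sw2_ge _ _ (not_lt.2 h), fwd_ex1 hkr p (by omega), sw1_gt _ _ (by omega),
          Nat.add_sub_cancel, ex_eq p.1.1 j.2]
    · funext j
      apply Fin.ext
      show sw1 (bidx (fwd hkr p)) (ex m (fwd hkr p).1.1) (ex m (fwd hkr p).1.2) (j : ℕ)
        = (p.1.2 j : ℕ)
      rw [hi]
      rcases le_or_gt (j : ℕ) (fidx p) with h | h
      · rw [sw1_le _ _ h, fwd_ex1 hkr p (by have := j.2; omega), sw1_le _ _ h, ex_eq p.1.2 j.2]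
      · rw [sw1_gt _ _ (not_le.2 h), fwd_ex2 hkr p (show (j:ℕ) - 1 < k - 1 by have := j.2; omega),
          sw2_ge _ _ (by omega)]
        have h2 : (j:ℕ) - 1 + 1 = (j:ℕ) := by omega
        rw [h2, ex_eq p.1.2 j.2]
  · intro q
    have hi := fidx_bwd hk1 hkr q
    have hb := bidx_le q
    apply Subtype.ext
    apply Prod.ext
    · funext j
      apply Fin.ext
      show sw1 (fidx (bwd hk1 hkr q)) (ex m (bwd hk1 hkr q).1.2) (ex m (bwd hk1 hkr q).1.1)
        (j : ℕ) = (q.1.1 j : ℕ)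
      rw [hi]
      rcases le_or_gt (j : ℕ) (bidx q) with h | h
      · rw [sw1_le _ _ h, bwd_ex2 hk1 hkr q (show (j:ℕ) < k by omega), sw1_le _ _ h,
          ex_eq q.1.1 j.2]
      · rw [sw1_gt _ _ (not_le.2 h), bwd_ex1 hk1 hkr q (show (j:ℕ) - 1 < r by have := j.2; omega),
          sw2_ge _ _ (by omega)]
        have h2 : (j:ℕ) - 1 + 1 = (j:ℕ) := by omega
        rw [h2, ex_eq q.1.1 j.2]
    · funext j
      apply Fin.ext
      show sw2 (fidx (bwd hk1 hkr q)) (ex m (bwd hk1 hkr q).1.2) (ex m (bwd hk1 hkr q).1.1)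
        (j : ℕ) = (q.1.2 j : ℕ)
      rw [hi]
      rcases lt_or_ge (j : ℕ) (bidx q) with h | h
      · rw [sw2_lt _ _ h, bwd_ex1 hk1 hkr q (show (j:ℕ) < r by have := j.2; omega),
          sw2_lt _ _ h, ex_eq q.1.2 j.2]
      · rw [sw2_ge _ _ (not_lt.2 h), bwd_ex2 hk1 hkr q (show (j:ℕ) + 1 < k by have := j.2; omega),
          sw1_gt _ _ (by omega), Nat.add_sub_cancel, ex_eq q.1.2 j.2]

end


private lemma card_chain (m n : ℕ) :
    Nat.card {f : Fin n → Fin m // StrictMono f} = m.choose n := by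
  have e : {f : Fin n → Fin m // StrictMono f} ≃ {s : Finset (Fin m) // s.card = n} :=
    { toFun := fun f => ⟨Finset.univ.image f.1, by
        rw [Finset.card_image_of_injective _ f.2.injective, Finset.card_univ, Fintype.card_fin]⟩
      invFun := fun s => ⟨s.1.orderEmbOfFin s.2, (s.1.orderEmbOfFin s.2).strictMono⟩
      left_inv := fun f => by
        apply Subtype.ext
        funext j
        exact congrFun (Finset.orderEmbOfFin_unique _ (fun x => Finset.mem_image_of_mem _ (Finset.mem_univ x)) f.2).symm j
      right_inv := fun s => by
        apply Subtype.ext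
        apply Finset.coe_injective
        rw [Finset.coe_image, Finset.coe_univ, Set.image_univ]
        exact Finset.range_orderEmbOfFin s.1 s.2 }
  rw [Nat.card_congr e, Nat.card_eq_fintype_card, Fintype.card_finset_len, Fintype.card_fin]

private lemma card_partition {α : Type*} [Fintype α] (P R : α → Prop) :
    Nat.card {p : α // P p ∧ R p} + Nat.card {p : α // P p ∧ ¬ R p} = Nat.card {p : α // P p} := by
  classical
  simp only [Nat.card_eq_fintype_card]
  rw [Fintype.card_subtype, Fintype.card_subtype, Fintype.card_subtype,
    ← Finset.filter_filter, ← Finset.filter_filter]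
  exact Finset.card_filter_add_card_filter_not R

private lemma card_pairs (a b m : ℕ) :
    Nat.card {q : (Fin a → Fin m) × (Fin b → Fin m) // StrictMono q.1 ∧ StrictMono q.2} =
      m.choose a * m.choose b := by
  rw [Nat.card_congr (Equiv.subtypeProdEquivProd), Nat.card_prod, card_chain, card_chain]

private lemma notR_iff {r k m : ℕ} (hkr : k ≤ r) (p : (Fin r → Fin m) × (Fin k → Fin m)) :
    (¬ ∀ (i : Fin r) (j : Fin k), (i : ℕ) = (j : ℕ) → p.1 i ≤ p.2 j) ↔
      ∃ j, j < k ∧ ex m p.2 j < ex m p.1 j := by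
  push_neg
  constructor
  · rintro ⟨i, j, hij, hlt⟩
    refine ⟨(j : ℕ), j.2, ?_⟩
    have hjr : (j : ℕ) < r := by have := i.2; omega
    rw [ex_eq p.2 j.2, ex_eq p.1 hjr]
    have h1 : (⟨(j : ℕ), j.2⟩ : Fin k) = j := by apply Fin.ext; rfl
    have h2 : (⟨(j : ℕ), hjr⟩ : Fin r) = i := by apply Fin.ext; simp [hij]
    rw [h1, h2]
    exact hlt
  · rintro ⟨j, hj, hlt⟩
    refine ⟨⟨j, by omega⟩, ⟨j, hj⟩, rfl, ?_⟩
    rw [ex_eq p.2 hj, ex_eq p.1 (show j < r by omega)] at hlt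
    exact hlt

/-- Number of semistandard Young tableaux with two columns of lengths `r ≥ l`,
entries in `{1,…,m}` (an entry is encoded as an element of `Fin m`, with value = index + 1):
entries strictly increase down each column and weakly increase along rows. -/
noncomputable def ssyt2 (r l m : ℕ) : ℕ :=
  Nat.card {p : (Fin r → Fin m) × (Fin l → Fin m) //
    StrictMono p.1 ∧ StrictMono p.2 ∧
    ∀ (i : Fin r) (j : Fin l), (i : ℕ) = (j : ℕ) → p.1 i ≤ p.2 j}

/-- The number of two-column SSYTs with column lengths `r ≥ k` and entries at most `m ≥ r`
equals `((r-k+1)/(r+1)) * C(m,r) * C(m+1,k)`. -/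
theorem ssyt2_count (r k m : ℕ) (hk : k ≤ r) (hr : r ≤ m) :
    (ssyt2 r k m : ℚ) =
      ((r - k + 1 : ℕ) : ℚ) / ((r : ℚ) + 1) *
        (m.choose r : ℚ) * ((m + 1).choose k : ℚ) := by
  classical
  set P : ((Fin r → Fin m) × (Fin k → Fin m)) → Prop :=
    fun p => StrictMono p.1 ∧ StrictMono p.2 with hP
  set R : ((Fin r → Fin m) × (Fin k → Fin m)) → Prop :=
    fun p => ∀ (i : Fin r) (j : Fin k), (i : ℕ) = (j : ℕ) → p.1 i ≤ p.2 j with hR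
  have hmain : ssyt2 r k m = Nat.card {p : (Fin r → Fin m) × (Fin k → Fin m) // P p ∧ R p} := by
    unfold ssyt2
    exact Nat.card_congr (Equiv.subtypeEquivRight fun p => by rw [hP, hR]; tauto)
  have hsplit := card_partition P R
  have hbadeq : Nat.card {p : (Fin r → Fin m) × (Fin k → Fin m) // P p ∧ ¬ R p} =
      Nat.card (BadT r k m) := by
    apply Nat.card_congr
    apply Equiv.subtypeEquivRight
    intro p
    rw [hP, hR]
    constructor
    · rintro ⟨⟨h1, h2⟩, h3⟩
      exact ⟨h1, h2, (notR_iff hk p).1 h3⟩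
    · rintro ⟨h1, h2, h3⟩
      exact ⟨⟨h1, h2⟩, (notR_iff hk p).2 h3⟩
  have htot : Nat.card {p : (Fin r → Fin m) × (Fin k → Fin m) // P p} =
      m.choose r * m.choose k := card_pairs r k m
  rcases Nat.eq_zero_or_pos k with hk0 | hk1
  · subst hk0
    have hbad0 : Nat.card (BadT r 0 m) = 0 := by
      have : IsEmpty (BadT r 0 m) :=
        ⟨fun p => by obtain ⟨j, hj, _⟩ := p.2.2.2; exact absurd hj (by omega)⟩
      exact Nat.card_of_isEmpty
    have hgood : ssyt2 r 0 m = m.choose r := by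
      rw [hmain]
      have := hbadeq.trans hbad0
      rw [Nat.choose_zero_right, mul_one] at htot
      omega
    rw [hgood, Nat.choose_zero_right]
    have hr1 : ((r : ℚ) + 1) ≠ 0 := by positivity
    rw [show r - 0 + 1 = r + 1 from rfl]
    push_cast
    field_simp
  · have hbc := bad_card (m := m) hk1 hk
    have hchcard : Nat.card (ChT r k m) = m.choose (r+1) * m.choose (k-1) :=
      card_pairs (r+1) (k-1) m
    have hsum : ssyt2 r k m + m.choose (r+1) * m.choose (k-1) = m.choose r * m.choose k := by
      rw [hmain]
      rw [hbadeq, hbc, hchcard] at hsplit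
      omega
    -- rational algebra
    have hk' : k - 1 + 1 = k := by omega
    have e1 := Nat.choose_succ_right_eq m (k - 1)
    rw [hk'] at e1
    have e2 := Nat.choose_succ_right_eq m r
    have e3 := Nat.choose_succ_succ' m (k - 1)
    rw [hk'] at e3
    have c1 : ((m.choose k : ℚ)) * k = (m.choose (k-1) : ℚ) * ((m : ℚ) - (k : ℚ) + 1) := by
      have h := congrArg (Nat.cast (R := ℚ)) e1
      push_cast [Nat.cast_sub (show k - 1 ≤ m by omega)] at h
      rw [h]
      have : ((k : ℚ) - 1) = ((k - 1 : ℕ) : ℚ) := by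
        push_cast [Nat.cast_sub (show 1 ≤ k by omega)]; ring
      push_cast [Nat.cast_sub (show 1 ≤ k by omega)]
      ring
    have c2 : ((m.choose (r+1) : ℚ)) * ((r:ℚ) + 1) = (m.choose r : ℚ) * ((m:ℚ) - (r:ℚ)) := by
      have h := congrArg (Nat.cast (R := ℚ)) e2
      push_cast [Nat.cast_sub hr] at h
      linarith [h]
    have c3 : (((m+1).choose k : ℚ)) = (m.choose (k-1) : ℚ) + (m.choose k : ℚ) := by
      exact_mod_cast congrArg (Nat.cast (R := ℚ)) e3
    have cgood : (ssyt2 r k m : ℚ) = (m.choose r : ℚ) * (m.choose k : ℚ)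
        - (m.choose (r+1) : ℚ) * (m.choose (k-1) : ℚ) := by
      have h := congrArg (Nat.cast (R := ℚ)) hsum
      push_cast at h
      linarith
    have hcast : ((r - k + 1 : ℕ) : ℚ) = (r : ℚ) - (k : ℚ) + 1 := by
      push_cast [Nat.cast_sub hk]; ring
    have hr1 : ((r : ℚ) + 1) ≠ 0 := by positivity
    rw [cgood, hcast, c3, div_mul_eq_mul_div, div_mul_eq_mul_div, eq_div_iff hr1]
    linear_combination (m.choose r : ℚ) * c1 - (m.choose (k-1) : ℚ) * c2
end

section
/- For all integers r, α, β with 1 ≤ r ≤ α ≤ β, the number X_r^{α,β} of semistandard Young tableaux of rectangular shape with two columns each of length r whose bottom row is (α, β) equals C(β, r-1)·C(α-1, r-1) − C(β-1, r-2)·C(α, r). -/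
/-- Binomial coefficient for integer arguments, with the convention
`C(n,k) = 0` whenever `k < 0` or `k > n`. -/
def Cz (n k : ℤ) : ℤ :=
  if 0 ≤ k ∧ k ≤ n then (n.toNat.choose k.toNat : ℤ) else 0

/-- `Xcard r α β` is the number of semistandard Young tableaux of rectangular shape with
two columns each of length `r` (positive integer entries, strictly increasing down columns,
weakly increasing along rows) whose bottom row is `(α, β)`. -/
noncomputable def Xcard (r α β : ℕ) : ℕ :=
  Nat.card {p : (Fin r → ℕ) × (Fin r → ℕ) //
    StrictMono p.1 ∧ StrictMono p.2 ∧
    (∀ i, 1 ≤ p.1 i ∧ p.1 i ≤ p.2 i) ∧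
    (∀ i : Fin r, (i : ℕ) = r - 1 → p.1 i = α ∧ p.2 i = β)}

lemma Cz_natCast (n k : ℕ) : Cz n k = (n.choose k : ℤ) := by
  by_cases h : k ≤ n
  · rw [Cz, if_pos ⟨Int.natCast_nonneg k, by exact_mod_cast h⟩, Int.toNat_natCast,
      Int.toNat_natCast]
  · rw [Cz, if_neg (by simpa using h), Nat.choose_eq_zero_of_lt (by omega), Nat.cast_zero]

lemma Cz_neg {n k : ℤ} (h : k < 0) : Cz n k = 0 := if_neg (by omega)

lemma Cz_gt {n k : ℤ} (h : n < k) : Cz n k = 0 := if_neg (by omega)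

lemma Cz_zero {n : ℤ} (h : 0 ≤ n) : Cz n 0 = 1 := by
  rw [Cz, if_pos ⟨le_refl 0, h⟩]; simp

lemma Cz_pascal {n : ℕ} (hn : 1 ≤ n) (k : ℤ) :
    Cz n k = Cz ((n : ℤ) - 1) (k - 1) + Cz ((n : ℤ) - 1) k := by
  obtain ⟨m, rfl⟩ : ∃ m, n = m + 1 := ⟨n - 1, by omega⟩
  have hm : ((m : ℤ) + 1) - 1 = (m : ℤ) := by ring
  push_cast
  rw [hm]
  rcases lt_trichotomy k 0 with hk | hk | hk
  · rw [Cz_neg hk, Cz_neg (by omega), Cz_neg hk]; ring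
  · subst hk
    rw [Cz_zero (by positivity), Cz_neg (by norm_num), Cz_zero (Int.natCast_nonneg m)]
    ring
  · lift k to ℕ using le_of_lt hk
    obtain ⟨j, rfl⟩ : ∃ j, k = j + 1 := ⟨k - 1, by exact_mod_cast (by omega : k = k - 1 + 1)⟩
    rw [show (((j + 1 : ℕ) : ℤ)) - 1 = ((j : ℕ) : ℤ) by push_cast; ring,
      show ((m : ℤ) + 1) = ((m + 1 : ℕ) : ℤ) by push_cast; ring,
      Cz_natCast, Cz_natCast, Cz_natCast, Nat.choose_succ_succ]
    push_cast; ring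

lemma sum_Ico_Cz (k : ℤ) (a n : ℕ) (h : a ≤ n) :
    ∑ b ∈ Finset.Ico a n, Cz b k = Cz n (k + 1) - Cz a (k + 1) := by
  induction n, h using Nat.le_induction with
  | base => simp
  | succ n hn ih =>
    rw [Finset.sum_Ico_succ_top hn, ih, Cz_pascal (show 1 ≤ n + 1 by omega) (k + 1)]
    push_cast
    have : ((n : ℤ) + 1) - 1 = (n : ℤ) := by ring
    rw [this]
    ring_nf

lemma sum_Ico_Cz' (k : ℤ) (a n : ℕ) (ha : 1 ≤ a) (h : a ≤ n) :
    ∑ b ∈ Finset.Ico a n, Cz ((b : ℤ) - 1) k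
      = Cz ((n : ℤ) - 1) (k + 1) - Cz ((a : ℤ) - 1) (k + 1) := by
  induction n, h using Nat.le_induction with
  | base => simp
  | succ n hn ih =>
    rw [Finset.sum_Ico_succ_top hn, ih,
      show ((n + 1 : ℕ) : ℤ) - 1 = ((n : ℕ) : ℤ) by push_cast; ring,
      Cz_pascal (show 1 ≤ n by omega) (k + 1)]
    ring_nf

def Tt (r α β : ℕ) : Type :=
  {p : (Fin r → ℕ) × (Fin r → ℕ) //
    StrictMono p.1 ∧ StrictMono p.2 ∧
    (∀ i, 1 ≤ p.1 i ∧ p.1 i ≤ p.2 i) ∧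
    (∀ i : Fin r, (i : ℕ) = r - 1 → p.1 i = α ∧ p.2 i = β)}

lemma Xcard_eq_card (r α β : ℕ) : Xcard r α β = Nat.card (Tt r α β) := rfl

lemma Tt_bound {r α β : ℕ} (t : Tt r α β) (i : Fin r) :
    t.1.2 i ≤ β := by
  have hr : 0 < r := i.pos
  set L : Fin r := ⟨r - 1, by omega⟩ with hL
  have hlast := (t.2.2.2.2 L (by simp [hL])).2
  have : t.1.2 i ≤ t.1.2 L := t.2.2.1.monotone (by simp [hL, Fin.le_def]; omega)
  omega

instance Tt_finite (r α β : ℕ) : Finite (Tt r α β) := by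
  apply Finite.of_injective
    (fun t : Tt r α β => ((fun i => (⟨min (t.1.1 i) β, by omega⟩ : Fin (β+1))),
      (fun i => (⟨min (t.1.2 i) β, by omega⟩ : Fin (β+1)))))
  intro t s h
  obtain ⟨h1, h2⟩ := Prod.mk.injEq _ _ _ _ ▸ h
  apply Subtype.ext
  have e1 : ∀ i, t.1.1 i = s.1.1 i := by
    intro i
    have ht := Tt_bound t i; have hs := Tt_bound s i
    have ht1 : t.1.1 i ≤ β := le_trans (t.2.2.2.1 i).2 ht
    have hs1 : s.1.1 i ≤ β := le_trans (s.2.2.2.1 i).2 hs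
    have := congrFun h1 i
    simp only [Fin.mk.injEq] at this
    omega
  have e2 : ∀ i, t.1.2 i = s.1.2 i := by
    intro i
    have ht := Tt_bound t i; have hs := Tt_bound s i
    have := congrFun h2 i
    simp only [Fin.mk.injEq] at this
    omega
  exact Prod.ext (funext e1) (funext e2)

lemma Xcard_one {α β : ℕ} (hα : 1 ≤ α) (hαβ : α ≤ β) : Xcard 1 α β = 1 := by
  rw [Xcard_eq_card]
  have : Unique (Tt 1 α β) := by
    refine ⟨⟨⟨((fun _ => α), (fun _ => β)), ?_, ?_, ?_, ?_⟩⟩, ?_⟩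
    · exact fun i j hij => absurd (Subsingleton.elim i j) (ne_of_lt hij)
    · exact fun i j hij => absurd (Subsingleton.elim i j) (ne_of_lt hij)
    · exact fun i => ⟨hα, hαβ⟩
    · exact fun i _ => ⟨rfl, rfl⟩
    · rintro ⟨⟨p1, p2⟩, h1, h2, h3, h4⟩
      have h0 := h4 0 rfl
      apply Subtype.ext
      refine Prod.ext (funext fun i => ?_) (funext fun i => ?_)
      · rw [Subsingleton.elim i 0]; exact h0.1
      · rw [Subsingleton.elim i 0]; exact h0.2
  exact Nat.card_unique

lemma Xcard_zero_of_lt {r α β : ℕ} (h : α < r) : Xcard r α β = 0 := by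
  rw [Xcard_eq_card]
  have : IsEmpty (Tt r α β) := by
    constructor
    intro t
    have key : ∀ j (hj : j < r), j + 1 ≤ t.1.1 ⟨j, hj⟩ := by
      intro j
      induction j with
      | zero => intro hj; exact (t.2.2.2.1 _).1
      | succ n ih =>
        intro hj
        have hn : n < r := by omega
        have := t.2.1 (show (⟨n, hn⟩ : Fin r) < ⟨n+1, hj⟩ by simp [Fin.lt_def])
        have := ih hn
        omega
    have hr : 0 < r := by omega
    have := key (r-1) (by omega)
    have := (t.2.2.2.2 ⟨r-1, by omega⟩ rfl).1
    omega
  simp [Nat.card_of_isEmpty]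

lemma nat_card_sigma {ι : Type*} [Fintype ι] (f : ι → Type*) [∀ i, Finite (f i)] :
    Nat.card (Σ i, f i) = ∑ i, Nat.card (f i) := by
  letI : ∀ i, Fintype (f i) := fun i => Fintype.ofFinite _
  simp [Nat.card_eq_fintype_card]

abbrev Sset (α β : ℕ) : Finset (ℕ × ℕ) :=
  (Finset.Ico 1 α ×ˢ Finset.Ico 1 β).filter (fun ab => ab.1 ≤ ab.2)

lemma mem_Sset {α β : ℕ} {ab : ℕ × ℕ} :
    ab ∈ Sset α β ↔ (1 ≤ ab.1 ∧ ab.1 < α) ∧ (1 ≤ ab.2 ∧ ab.2 < β) ∧ ab.1 ≤ ab.2 := by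
  simp only [Sset, Finset.mem_filter, Finset.mem_product, Finset.mem_Ico]
  tauto

def Ifin (s : ℕ) : Fin (s+2) := ⟨s, by omega⟩
def Lfin (s : ℕ) : Fin (s+2) := ⟨s+1, by omega⟩

def Fmap (s α β : ℕ) (t : Tt (s+2) α β) : ↥(Sset α β) :=
  ⟨(t.1.1 (Ifin s), t.1.2 (Ifin s)), by
    rw [mem_Sset]
    have h1 := t.2.2.2.1 (Ifin s)
    have hIL : Ifin s < Lfin s := by simp [Ifin, Lfin, Fin.lt_def]
    have hL := t.2.2.2.2 (Lfin s) rfl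
    have ha := t.2.1 hIL
    have hb := t.2.2.1 hIL
    exact ⟨⟨h1.1, by omega⟩, ⟨by omega, by omega⟩, h1.2⟩⟩

lemma Icast (s : ℕ) : Fin.castSucc (Fin.last s) = Ifin s := by
  apply Fin.ext; simp [Ifin]

def fiberEquiv (s α β : ℕ) (hαβ : α ≤ β) (ab : ↥(Sset α β)) :
    {t : Tt (s+2) α β // Fmap s α β t = ab} ≃ Tt (s+1) ab.1.1 ab.1.2 where
  toFun tt := ⟨(tt.1.1.1 ∘ Fin.castSucc, tt.1.1.2 ∘ Fin.castSucc), by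
    have hF : (tt.1.1.1 (Ifin s), tt.1.1.2 (Ifin s)) = ab.1 :=
      congrArg Subtype.val tt.2
    refine ⟨fun i j hij => tt.1.2.1 (by simpa using hij),
            fun i j hij => tt.1.2.2.1 (by simpa using hij),
            fun i => tt.1.2.2.2.1 _, fun i hi => ?_⟩
    have hi' : Fin.castSucc i = Ifin s := by
      apply Fin.ext; simp [Ifin]; omega
    simp only [Function.comp_apply, hi']
    exact ⟨congrArg Prod.fst hF, congrArg Prod.snd hF⟩⟩
  invFun u := ⟨⟨(Fin.snoc u.1.1 α, Fin.snoc u.1.2 β), by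
    have hab := mem_Sset.mp ab.2
    have hu := u.2.2.2.2 (Fin.last s) rfl
    have sm : ∀ (f : Fin (s+1) → ℕ) (c : ℕ), StrictMono f → f (Fin.last s) < c →
        StrictMono (Fin.snoc f c : Fin (s+2) → ℕ) := by
      intro f c hf hc
      rw [Fin.strictMono_iff_lt_succ]
      intro i
      induction i using Fin.lastCases with
      | last =>
        rw [Fin.succ_last, Fin.snoc_last, Fin.snoc_castSucc]
        exact hc
      | cast j =>
        rw [Fin.succ_castSucc, Fin.snoc_castSucc, Fin.snoc_castSucc]
        exact hf (Fin.castSucc_lt_succ (i := j))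
    refine ⟨sm _ _ u.2.1 (by rw [hu.1]; exact hab.1.2),
            sm _ _ u.2.2.1 (by rw [hu.2]; exact hab.2.1.2),
            fun i => ?_, fun i hi => ?_⟩
    · dsimp only
      induction i using Fin.lastCases with
      | last =>
        rw [Fin.snoc_last, Fin.snoc_last]
        exact ⟨by omega, hαβ⟩
      | cast j =>
        rw [Fin.snoc_castSucc, Fin.snoc_castSucc]
        exact u.2.2.2.1 j
    · have : i = Fin.last (s+1) := by apply Fin.ext; simpa using hi
      subst this
      dsimp only
      rw [Fin.snoc_last, Fin.snoc_last]
      exact ⟨rfl, rfl⟩⟩, by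
    apply Subtype.ext
    have hu := u.2.2.2.2 (Fin.last s) rfl
    show (_, _) = ab.1
    rw [show Ifin s = Fin.castSucc (Fin.last s) from (Icast s).symm]
    simp only [Fin.snoc_castSucc]
    exact Prod.ext hu.1 hu.2⟩
  left_inv tt := by
    apply Subtype.ext
    apply Subtype.ext
    have hL := tt.1.2.2.2.2 (Lfin s) rfl
    have hlast : Fin.last (s+1) = Lfin s := by apply Fin.ext; simp [Lfin]
    refine Prod.ext (funext fun i => ?_) (funext fun i => ?_) <;>
    · induction i using Fin.lastCases with
      | last => dsimp only; rw [Fin.snoc_last, hlast]; exact (by simp [hL.1, hL.2])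
      | cast j => dsimp only; rw [Fin.snoc_castSucc]; rfl
  right_inv u := by
    apply Subtype.ext
    refine Prod.ext (funext fun i => ?_) (funext fun i => ?_) <;>
      simp [Fin.snoc_castSucc]

lemma Xcard_rec (s α β : ℕ) (hαβ : α ≤ β) :
    Xcard (s + 2) α β = ∑ ab ∈ Sset α β, Xcard (s + 1) ab.1 ab.2 := by
  rw [Xcard_eq_card,
    Nat.card_congr (Equiv.sigmaFiberEquiv (Fmap s α β)).symm,
    nat_card_sigma]
  rw [← Finset.sum_coe_sort (Sset α β) (fun ab => Xcard (s+1) ab.1 ab.2)]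
  exact Finset.sum_congr rfl fun ab _ =>
    Nat.card_congr (fiberEquiv s α β hαβ ab)


lemma Sset_sum (α β : ℕ) (f : ℕ → ℕ → ℤ) :
    ∑ ab ∈ Sset α β, f ab.1 ab.2 =
      ∑ a ∈ Finset.Ico 1 α, ∑ b ∈ Finset.Ico a β, f a b := by
  rw [Finset.sum_filter, Finset.sum_product]
  refine Finset.sum_congr rfl fun a ha => ?_
  have ha1 : 1 ≤ a := (Finset.mem_Ico.mp ha).1
  rw [← Finset.sum_filter]
  congr 1
  ext x
  simp only [Finset.mem_filter, Finset.mem_Ico]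
  omega

/-- For `1 ≤ r ≤ α ≤ β`,
`X_r^{α,β} = C(β, r-1)·C(α-1, r-1) − C(β-1, r-2)·C(α, r)`. -/
theorem Xcard_eq (r α β : ℕ) (h1 : 1 ≤ r) (h2 : r ≤ α) (h3 : α ≤ β) :
    (Xcard r α β : ℤ) =
      Cz (β : ℤ) ((r : ℤ) - 1) * Cz ((α : ℤ) - 1) ((r : ℤ) - 1) -
        Cz ((β : ℤ) - 1) ((r : ℤ) - 2) * Cz (α : ℤ) (r : ℤ) := by
  induction r, h1 using Nat.le_induction generalizing α β with
  | base =>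
    rw [Xcard_one (by omega) h3, Nat.cast_one,
      show (1:ℤ) - 1 = 0 by norm_num,
      show (1:ℤ) - 2 = -1 by norm_num,
      Cz_zero (by positivity), Cz_zero (by omega), Cz_neg (by norm_num)]
    ring
  | succ r hr ih =>
    obtain ⟨s, rfl⟩ : ∃ s, r = s + 1 := ⟨r - 1, by omega⟩
    rw [show s + 1 + 1 = s + 2 from rfl, Xcard_rec s α β h3, Nat.cast_sum, Sset_sum α β (fun a b => ((Xcard (s+1) a b : ℕ) : ℤ))]
    have hstep : ∀ a ∈ Finset.Ico (s+1) α,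
        ∑ b ∈ Finset.Ico a β, ((Xcard (s+1) a b : ℕ) : ℤ) =
          Cz (β:ℤ) ((s:ℤ)+1) * Cz ((a:ℤ)-1) (s:ℤ) -
            Cz ((β:ℤ)-1) (s:ℤ) * Cz (a:ℤ) ((s:ℤ)+1) := by
      intro a ha
      rw [Finset.mem_Ico] at ha
      have haβ : a ≤ β := by omega
      have e1 : ((s+1:ℕ):ℤ) - 1 = (s:ℤ) := by push_cast; ring
      have e2 : ((s+1:ℕ):ℤ) - 2 = (s:ℤ) - 1 := by push_cast; ring
      have e3 : ((s+1:ℕ):ℤ) = (s:ℤ) + 1 := by push_cast; ring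
      calc ∑ b ∈ Finset.Ico a β, ((Xcard (s+1) a b : ℕ) : ℤ)
          = ∑ b ∈ Finset.Ico a β,
              (Cz (b:ℤ) (s:ℤ) * Cz ((a:ℤ)-1) (s:ℤ) -
                Cz ((b:ℤ)-1) ((s:ℤ)-1) * Cz (a:ℤ) ((s:ℤ)+1)) := by
            refine Finset.sum_congr rfl fun b hb => ?_
            rw [Finset.mem_Ico] at hb
            rw [ih a b ha.1 hb.1, e1, e2, e3]
        _ = (∑ b ∈ Finset.Ico a β, Cz (b:ℤ) (s:ℤ)) * Cz ((a:ℤ)-1) (s:ℤ) -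
              (∑ b ∈ Finset.Ico a β, Cz ((b:ℤ)-1) ((s:ℤ)-1)) * Cz (a:ℤ) ((s:ℤ)+1) := by
            rw [Finset.sum_sub_distrib, Finset.sum_mul, Finset.sum_mul]
        _ = (Cz (β:ℤ) ((s:ℤ)+1) - Cz (a:ℤ) ((s:ℤ)+1)) * Cz ((a:ℤ)-1) (s:ℤ) -
              (Cz ((β:ℤ)-1) (s:ℤ) - Cz ((a:ℤ)-1) (s:ℤ)) * Cz (a:ℤ) ((s:ℤ)+1) := by
            rw [sum_Ico_Cz (s:ℤ) a β haβ,
              sum_Ico_Cz' ((s:ℤ)-1) a β (by omega) haβ,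
              show (s:ℤ) - 1 + 1 = (s:ℤ) by ring]
        _ = Cz (β:ℤ) ((s:ℤ)+1) * Cz ((a:ℤ)-1) (s:ℤ) -
              Cz ((β:ℤ)-1) (s:ℤ) * Cz (a:ℤ) ((s:ℤ)+1) := by ring
    calc ∑ a ∈ Finset.Ico 1 α, ∑ b ∈ Finset.Ico a β, ((Xcard (s+1) a b : ℕ) : ℤ)
        = ∑ a ∈ Finset.Ico (s+1) α, ∑ b ∈ Finset.Ico a β, ((Xcard (s+1) a b : ℕ) : ℤ) := by
          refine (Finset.sum_subset (Finset.Ico_subset_Ico (by omega) le_rfl)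
            fun a ha hna => ?_).symm
          have h1a := Finset.mem_Ico.mp ha
          have : a < s + 1 := by
            by_contra hc
            push_neg at hc
            exact hna (Finset.mem_Ico.mpr ⟨hc, h1a.2⟩)
          refine Finset.sum_eq_zero fun b _ => ?_
          rw [Xcard_zero_of_lt this, Nat.cast_zero]
      _ = ∑ a ∈ Finset.Ico (s+1) α,
            (Cz (β:ℤ) ((s:ℤ)+1) * Cz ((a:ℤ)-1) (s:ℤ) -
              Cz ((β:ℤ)-1) (s:ℤ) * Cz (a:ℤ) ((s:ℤ)+1)) :=
          Finset.sum_congr rfl hstep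
      _ = Cz (β:ℤ) ((s:ℤ)+1) * (∑ a ∈ Finset.Ico (s+1) α, Cz ((a:ℤ)-1) (s:ℤ)) -
            Cz ((β:ℤ)-1) (s:ℤ) * (∑ a ∈ Finset.Ico (s+1) α, Cz (a:ℤ) ((s:ℤ)+1)) := by
          rw [Finset.sum_sub_distrib, Finset.mul_sum, Finset.mul_sum]
      _ = Cz (β:ℤ) ((s:ℤ)+1) * Cz ((α:ℤ)-1) ((s:ℤ)+1) -
            Cz ((β:ℤ)-1) (s:ℤ) * Cz (α:ℤ) ((s:ℤ)+2) := by
          rw [sum_Ico_Cz' (s:ℤ) (s+1) α (by omega) (by omega),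
            sum_Ico_Cz ((s:ℤ)+1) (s+1) α (by omega),
            show ((s+1:ℕ):ℤ) - 1 = (s:ℤ) by push_cast; ring,
            show ((s+1:ℕ):ℤ) = (s:ℤ)+1 by push_cast; ring,
            Cz_gt (show (s:ℤ) < (s:ℤ)+1 by omega),
            Cz_gt (show (s:ℤ)+1 < (s:ℤ)+1+1 by omega),
            show (s:ℤ)+1+1 = (s:ℤ)+2 by ring]
          ring
      _ = Cz (β:ℤ) (((s+2:ℕ):ℤ)-1) * Cz ((α:ℤ)-1) (((s+2:ℕ):ℤ)-1) -
            Cz ((β:ℤ)-1) (((s+2:ℕ):ℤ)-2) * Cz (α:ℤ) ((s+2:ℕ):ℤ) := by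
          rw [show ((s+2:ℕ):ℤ) - 1 = (s:ℤ)+1 by push_cast; ring,
            show ((s+2:ℕ):ℤ) - 2 = (s:ℤ) by push_cast; ring,
            show ((s+2:ℕ):ℤ) = (s:ℤ)+2 by push_cast; ring]
end

section
/- For two-column shapes with column lengths r ≥ l and entries at most m, the number Y_{r,l}^m(m) of SSYTs in which the maximal entry m appears in the second column equals C(m, l-1)·C(m, r) − C(m-1, l-2)·C(m+1, r+1). -/
/-- `Ycard r l m β` is the number of SSYTs with two columns of lengths `r ≥ l`, entries in
`{1,…,m}` (encoded in `Fin m`, value = index + 1), such that the value `β` appears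
somewhere in the second column. -/
noncomputable def Ycard (r l m β : ℕ) : ℕ :=
  Nat.card {p : (Fin r → Fin m) × (Fin l → Fin m) //
    (StrictMono p.1 ∧ StrictMono p.2 ∧
      ∀ (i : Fin r) (j : Fin l), (i : ℕ) = (j : ℕ) → p.1 i ≤ p.2 j) ∧
    ∃ j : Fin l, (p.2 j : ℕ) + 1 = β}


/-- Bounded strictly-monotone sequence predicate: `f` is strictly increasing on `[0,n)`,
with values `< m` there, and `0` beyond. -/
def SMB (n m : ℕ) (f : ℕ → ℕ) : Prop :=
  (∀ i j : ℕ, i < j → j < n → f i < f j) ∧ (∀ i : ℕ, i < n → f i < m) ∧ ∀ i : ℕ, n ≤ i → f i = 0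

lemma SMB.mono {n m : ℕ} {f : ℕ → ℕ} (h : SMB n m f) {i j : ℕ} (hij : i ≤ j) (hj : j < n) :
    f i ≤ f j := by
  rcases hij.lt_or_eq with h' | rfl
  · exact (h.1 i j h' hj).le
  · exact le_rfl

lemma SMB.add_le {n m : ℕ} {f : ℕ → ℕ} (h : SMB n m f) {i j : ℕ} (hij : i ≤ j) (hj : j < n) :
    f i + (j - i) ≤ f j := by
  have aux : ∀ d : ℕ, i + d < n → f i + d ≤ f (i + d) := by
    intro d
    induction d with
    | zero => simp
    | succ d ih =>
      intro hd
      have h1 := ih (by omega)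
      have h2 : f (i + d) < f (i + (d + 1)) := h.1 _ _ (by omega) (by omega)
      omega
  obtain ⟨d, rfl⟩ := Nat.exists_eq_add_of_le hij
  simpa using aux d hj

/-- Strictly monotone `Fin` maps are the same as `SMB` sequences. -/
def smbEquiv (n m : ℕ) : {f : Fin n → Fin m // StrictMono f} ≃ {f : ℕ → ℕ // SMB n m f} where
  toFun g := ⟨fun i => if h : i < n then (g.1 ⟨i, h⟩ : ℕ) else 0, by
    refine ⟨fun i j hij hj => ?_, fun i hi => ?_, fun i hi => ?_⟩ <;> dsimp only
    · rw [dif_pos (hij.trans hj), dif_pos hj]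
      exact g.2 (show (⟨i, hij.trans hj⟩ : Fin n) < ⟨j, hj⟩ from hij)
    · rw [dif_pos hi]; exact (g.1 _).2
    · rw [dif_neg (by omega)]⟩
  invFun f := ⟨fun i => ⟨f.1 i.1, f.2.2.1 _ i.2⟩, fun i j hij => by
    simpa [Fin.lt_def] using f.2.1 i.1 j.1 hij j.2⟩
  left_inv g := by
    apply Subtype.ext; funext i; apply Fin.ext; simp [i.2]
  right_inv f := by
    apply Subtype.ext; funext i
    by_cases h : i < n
    · simp [h]
    · simp only [dif_neg h]
      exact (f.2.2.2 i (by omega)).symm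

/-- Strictly monotone maps correspond to their ranges. -/
def smFinsetEquiv (n m : ℕ) :
    {f : Fin n → Fin m // StrictMono f} ≃ {s : Finset (Fin m) // s.card = n} where
  toFun g := ⟨Finset.univ.image g.1, by
    rw [Finset.card_image_of_injective _ g.2.injective, Finset.card_univ, Fintype.card_fin]⟩
  invFun s := ⟨s.1.orderEmbOfFin s.2, (s.1.orderEmbOfFin s.2).strictMono⟩
  left_inv g := Subtype.ext
    (Finset.orderEmbOfFin_unique _ (fun i => Finset.mem_image_of_mem _ (Finset.mem_univ i))
      g.2).symm
  right_inv s := Subtype.ext (by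
    have h := Finset.range_orderEmbOfFin s.1 s.2
    rw [← Finset.coe_inj, Finset.coe_image, Finset.coe_univ, Set.image_univ, h])

lemma card_smb (n m : ℕ) : Nat.card {f : ℕ → ℕ // SMB n m f} = m.choose n := by
  rw [← Nat.card_congr (smbEquiv n m), Nat.card_congr (smFinsetEquiv n m),
    Nat.card_eq_fintype_card, Fintype.card_finset_len, Fintype.card_fin]

instance (n m : ℕ) : Finite {f : ℕ → ℕ // SMB n m f} :=
  Finite.of_equiv _ (smbEquiv n m)

/-- All pairs of columns. -/
abbrev Tset (r s m m' : ℕ) :=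
  {p : (ℕ → ℕ) × (ℕ → ℕ) // SMB r m p.1 ∧ SMB s m' p.2}

/-- Dominated pairs (valid two-column SSYTs). -/
abbrev Pset (r s m m' : ℕ) :=
  {p : (ℕ → ℕ) × (ℕ → ℕ) // (SMB r m p.1 ∧ SMB s m' p.2) ∧ ∀ i, i < s → p.1 i ≤ p.2 i}

/-- Violating pairs. -/
abbrev Bset (r s m m' : ℕ) :=
  {p : (ℕ → ℕ) × (ℕ → ℕ) // (SMB r m p.1 ∧ SMB s m' p.2) ∧ ∃ i, i < s ∧ p.2 i < p.1 i}

def tsetEquiv (r s m m' : ℕ) :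
    Tset r s m m' ≃ {f : ℕ → ℕ // SMB r m f} × {f : ℕ → ℕ // SMB s m' f} :=
  Equiv.subtypeProdEquivProd

instance (r s m m' : ℕ) : Finite (Tset r s m m') := Finite.of_equiv _ (tsetEquiv r s m m').symm

instance (r s m m' : ℕ) : Finite (Pset r s m m') :=
  Finite.of_injective (fun x => (⟨x.1, x.2.1⟩ : Tset r s m m'))
    (fun x y h => by simp only [Subtype.mk.injEq] at h; exact Subtype.ext h)

instance (r s m m' : ℕ) : Finite (Bset r s m m') :=
  Finite.of_injective (fun x => (⟨x.1, x.2.1⟩ : Tset r s m m'))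
    (fun x y h => by simp only [Subtype.mk.injEq] at h; exact Subtype.ext h)

lemma card_tset (r s m m' : ℕ) :
    Nat.card (Tset r s m m') = m.choose r * m'.choose s := by
  rw [Nat.card_congr (tsetEquiv r s m m'), Nat.card_prod, card_smb, card_smb]

lemma card_split (r s m m' : ℕ) :
    Nat.card (Pset r s m m') + Nat.card (Bset r s m m') = Nat.card (Tset r s m m') := by
  classical
  have e : Tset r s m m' ≃ Pset r s m m' ⊕ Bset r s m m' := by
    refine (Equiv.sumCompl (fun t : Tset r s m m' => ∀ i, i < s → t.1.1 i ≤ t.1.2 i)).symm.trans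
      (Equiv.sumCongr ?_ ?_)
    · exact (Equiv.subtypeSubtypeEquivSubtypeInter
        (fun p : (ℕ → ℕ) × (ℕ → ℕ) => SMB r m p.1 ∧ SMB s m' p.2)
        (fun p => ∀ i, i < s → p.1 i ≤ p.2 i))
    · refine (Equiv.subtypeSubtypeEquivSubtypeInter
        (fun p : (ℕ → ℕ) × (ℕ → ℕ) => SMB r m p.1 ∧ SMB s m' p.2)
        (fun p => ¬ ∀ i, i < s → p.1 i ≤ p.2 i)).trans (Equiv.subtypeEquivRight ?_)
      intro p
      constructor
      · rintro ⟨hq, hn⟩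
        push_neg at hn
        obtain ⟨i, hi, hlt⟩ := hn
        exact ⟨hq, i, hi, hlt⟩
      · rintro ⟨hq, i, hi, hlt⟩
        exact ⟨hq, fun h => absurd (h i hi) (by omega)⟩
  rw [Nat.card_congr e, Nat.card_sum]

section Reflection

/-- Forward reflection, long column. -/
def fwdc (a b : ℕ → ℕ) (k : ℕ) : ℕ → ℕ := fun i => if i ≤ k then b i else a (i - 1)
/-- Forward reflection, short column. -/
def fwdd (a b : ℕ → ℕ) (k : ℕ) : ℕ → ℕ := fun j => if j < k then a j else b (j + 1)
/-- Backward reflection, long column. -/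
def bwda (c d : ℕ → ℕ) (K : ℕ) : ℕ → ℕ := fun i => if i < K then d i else c (i + 1)
/-- Backward reflection, short column. -/
def bwdb (c d : ℕ → ℕ) (K : ℕ) : ℕ → ℕ := fun j => if j ≤ K then c j else d (j - 1)

variable {r s' m m' k K : ℕ} {a b c d : ℕ → ℕ}

lemma fwdc_smb (ha : SMB r m a) (hb : SMB (s' + 1) m' b) (hm' : m' ≤ m) (hs : s' + 1 ≤ r)
    (hk : k < s' + 1) (hviol : b k < a k) :
    SMB (r + 1) m (fwdc a b k) := by
  refine ⟨fun i j hij hj => ?_, fun i hi => ?_, fun i hi => ?_⟩ <;> unfold fwdc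
  · by_cases hjk : j ≤ k
    · rw [if_pos (by omega), if_pos hjk]
      exact hb.1 i j hij (by omega)
    · rw [if_neg hjk]
      by_cases hik : i ≤ k
      · rw [if_pos hik]
        calc b i ≤ b k := hb.mono hik (by omega)
        _ < a k := hviol
        _ ≤ a (j - 1) := ha.mono (by omega) (by omega)
      · rw [if_neg hik]
        exact ha.1 _ _ (by omega) (by omega)
  · by_cases hik : i ≤ k
    · rw [if_pos hik]; exact lt_of_lt_of_le (hb.2.1 i (by omega)) hm'
    · rw [if_neg hik]; exact ha.2.1 _ (by omega)
  · rw [if_neg (by omega)]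
    exact ha.2.2 _ (by omega)

lemma fwdd_smb (ha : SMB r m a) (hb : SMB (s' + 1) m' b) (hs : s' + 1 ≤ r)
    (hk : k < s' + 1) (hmin : ∀ i, i < k → a i ≤ b i) :
    SMB s' m' (fwdd a b k) := by
  refine ⟨fun i j hij hj => ?_, fun i hi => ?_, fun i hi => ?_⟩ <;> unfold fwdd
  · by_cases hjk : j < k
    · rw [if_pos (by omega), if_pos hjk]
      exact ha.1 i j hij (by omega)
    · rw [if_neg hjk]
      by_cases hik : i < k
      · rw [if_pos hik]
        calc a i ≤ b i := hmin i hik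
        _ < b (j + 1) := hb.1 i (j + 1) (by omega) (by omega)
      · rw [if_neg hik]
        exact hb.1 _ _ (by omega) (by omega)
  · by_cases hik : i < k
    · rw [if_pos hik]
      exact lt_of_le_of_lt (hmin i hik) (hb.2.1 i (by omega))
    · rw [if_neg hik]; exact hb.2.1 _ (by omega)
  · rw [if_neg (by omega)]
    exact hb.2.2 _ (by omega)

lemma bwda_smb (hc : SMB (r + 1) m c) (hd : SMB s' m' d) (hm' : m' ≤ m) (hs : s' + 1 ≤ r)
    (hK : K ≤ s') (hKmin : ∀ i, i < K → d i ≤ c i) :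
    SMB r m (bwda c d K) := by
  refine ⟨fun i j hij hj => ?_, fun i hi => ?_, fun i hi => ?_⟩ <;> unfold bwda
  · by_cases hjk : j < K
    · rw [if_pos (by omega), if_pos hjk]
      exact hd.1 i j hij (by omega)
    · rw [if_neg hjk]
      by_cases hik : i < K
      · rw [if_pos hik]
        calc d i ≤ c i := hKmin i hik
        _ < c (j + 1) := hc.1 i (j + 1) (by omega) (by omega)
      · rw [if_neg hik]
        exact hc.1 _ _ (by omega) (by omega)
  · by_cases hik : i < K
    · rw [if_pos hik]
      exact lt_of_lt_of_le (hd.2.1 i (by omega)) hm'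
    · rw [if_neg hik]; exact hc.2.1 _ (by omega)
  · rw [if_neg (by omega)]
    exact hc.2.2 _ (by omega)

lemma bwdb_smb (hc : SMB (r + 1) m c) (hd : SMB s' m' d) (hs : s' + 1 ≤ r)
    (hmm : s' + m ≤ r + m')
    (hK : K ≤ s') (hKlt : K < s' → c K < d K) :
    SMB (s' + 1) m' (bwdb c d K) := by
  refine ⟨fun i j hij hj => ?_, fun i hi => ?_, fun i hi => ?_⟩ <;> unfold bwdb
  · by_cases hjk : j ≤ K
    · rw [if_pos (by omega), if_pos hjk]
      exact hc.1 i j hij (by omega)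
    · rw [if_neg hjk]
      by_cases hik : i ≤ K
      · rw [if_pos hik]
        have hKs : K < s' := by omega
        calc c i ≤ c K := hc.mono hik (by omega)
        _ < d K := hKlt hKs
        _ ≤ d (j - 1) := hd.mono (by omega) (by omega)
      · rw [if_neg hik]
        exact hd.1 _ _ (by omega) (by omega)
  · by_cases hik : i ≤ K
    · rw [if_pos hik]
      have h1 : c K + (r - K) ≤ c r := hc.add_le (by omega) (by omega)
      have h2 : c r < m := hc.2.1 r (by omega)
      have h3 : c i ≤ c K := hc.mono hik (by omega)
      omega
    · rw [if_neg hik]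
      exact hd.2.1 _ (by omega)
  · rw [if_neg (by omega)]
    exact hd.2.2 _ (by omega)

lemma bwd_roundtrip_a : bwda (fwdc a b k) (fwdd a b k) k = a := by
  funext i
  simp only [bwda, fwdc, fwdd]
  split_ifs <;> first | rfl | omega | (congr 1; omega)

lemma bwd_roundtrip_b : bwdb (fwdc a b k) (fwdd a b k) k = b := by
  funext i
  simp only [bwdb, fwdc, fwdd]
  split_ifs <;> first | rfl | omega | (congr 1; omega)

lemma fwd_roundtrip_c : fwdc (bwda c d K) (bwdb c d K) K = c := by
  funext i
  simp only [bwda, bwdb, fwdc, fwdd]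
  split_ifs <;> first | rfl | omega | (congr 1; omega)

lemma fwd_roundtrip_d : fwdd (bwda c d K) (bwdb c d K) K = d := by
  funext i
  simp only [bwda, bwdb, fwdc, fwdd]
  split_ifs <;> first | rfl | omega | (congr 1; omega)

end Reflection

section ReflEquiv

/-- Splitting index for the backward reflection. -/
def Kfind (s' : ℕ) (c d : ℕ → ℕ) : ℕ :=
  Nat.find (⟨s', Or.inl rfl⟩ : ∃ i, i = s' ∨ (i < s' ∧ c i < d i))

variable {r s' m m' : ℕ} {a b c d : ℕ → ℕ}

lemma Kfind_le : Kfind s' c d ≤ s' := by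
  rcases Nat.find_spec (⟨s', Or.inl rfl⟩ : ∃ i, i = s' ∨ (i < s' ∧ c i < d i)) with h | h
  · exact le_of_eq h
  · exact h.1.le

lemma Kfind_lt (h : Kfind s' c d < s') : c (Kfind s' c d) < d (Kfind s' c d) := by
  rcases Nat.find_spec (⟨s', Or.inl rfl⟩ : ∃ i, i = s' ∨ (i < s' ∧ c i < d i)) with h' | h'
  · exact absurd h' (by unfold Kfind at h; omega)
  · exact h'.2

lemma Kfind_min : ∀ i, i < Kfind s' c d → d i ≤ c i := by
  intro i hi
  have h1 := Nat.find_min (⟨s', Or.inl rfl⟩ : ∃ i, i = s' ∨ (i < s' ∧ c i < d i)) hi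
  have h2 : Kfind s' c d ≤ s' := Kfind_le
  push_neg at h1
  exact h1.2 (by unfold Kfind at hi h2; omega)

lemma find_min_le (hv : ∃ i, i < s' + 1 ∧ b i < a i) :
    ∀ i, i < Nat.find hv → a i ≤ b i := by
  intro i hi
  have h1 := Nat.find_min hv hi
  have h2 := (Nat.find_spec hv).1
  push_neg at h1
  exact h1 (by omega)

lemma bwd_viol (hc : SMB (r + 1) m c) (hs : s' + 1 ≤ r) {K : ℕ} (hK : K ≤ s') :
    bwdb c d K K < bwda c d K K := by
  simp only [bwda, bwdb, if_pos le_rfl, if_neg (lt_irrefl K)]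
  exact hc.1 K (K + 1) (by omega) (by omega)

lemma find_eq_k (hb : SMB (s' + 1) m' b) (hv : ∃ i, i < s' + 1 ∧ b i < a i) :
    Kfind s' (fwdc a b (Nat.find hv)) (fwdd a b (Nat.find hv)) = Nat.find hv := by
  set k := Nat.find hv with hk
  have hks := (Nat.find_spec hv).1
  rw [Kfind, Nat.find_eq_iff]
  constructor
  · by_cases h : k < s'
    · refine Or.inr ⟨h, ?_⟩
      simp only [fwdc, fwdd, if_pos le_rfl, if_neg (lt_irrefl k)]
      exact hb.1 k (k + 1) (by omega) (by omega)
    · exact Or.inl (by omega)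
  · intro i hi
    push_neg
    refine ⟨by omega, fun his => ?_⟩
    simp only [fwdc, fwdd, if_pos (by omega : i ≤ k), if_pos hi]
    exact find_min_le hv i hi

lemma find_eq_K (hc : SMB (r + 1) m c) (hs : s' + 1 ≤ r)
    (hv : ∃ i, i < s' + 1 ∧ bwdb c d (Kfind s' c d) i < bwda c d (Kfind s' c d) i) :
    Nat.find hv = Kfind s' c d := by
  rw [Nat.find_eq_iff]
  have hK : Kfind s' c d ≤ s' := Kfind_le
  refine ⟨⟨by omega, bwd_viol hc hs hK⟩, ?_⟩
  intro i hi
  push_neg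
  intro his
  simp only [bwda, bwdb, if_pos (by omega : i ≤ Kfind s' c d), if_pos hi]
  exact Kfind_min i hi

/-- The reflection bijection: violating pairs correspond to arbitrary pairs of
columns of lengths `r+1` and `s'`. -/
def reflEquiv (r s' m m' : ℕ) (hs : s' + 1 ≤ r) (hm' : m' ≤ m) (hmm : s' + m ≤ r + m') :
    Bset r (s' + 1) m m' ≃ {f : ℕ → ℕ // SMB (r + 1) m f} × {f : ℕ → ℕ // SMB s' m' f} where
  toFun x :=
    (⟨fwdc x.1.1 x.1.2 (Nat.find x.2.2),
      fwdc_smb x.2.1.1 x.2.1.2 hm' hs (Nat.find_spec x.2.2).1 (Nat.find_spec x.2.2).2⟩,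
     ⟨fwdd x.1.1 x.1.2 (Nat.find x.2.2),
      fwdd_smb x.2.1.1 x.2.1.2 hs (Nat.find_spec x.2.2).1 (find_min_le x.2.2)⟩)
  invFun y :=
    ⟨(bwda y.1.1 y.2.1 (Kfind s' y.1.1 y.2.1), bwdb y.1.1 y.2.1 (Kfind s' y.1.1 y.2.1)),
     ⟨⟨bwda_smb y.1.2 y.2.2 hm' hs Kfind_le Kfind_min,
       bwdb_smb y.1.2 y.2.2 hs hmm Kfind_le Kfind_lt⟩,
      ⟨Kfind s' y.1.1 y.2.1, by
        have := (Kfind_le : Kfind s' y.1.1 y.2.1 ≤ s')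
        exact ⟨by omega, bwd_viol y.1.2 hs this⟩⟩⟩⟩
  left_inv := by
    rintro ⟨⟨a, b⟩, hQ, hv⟩
    apply Subtype.ext
    dsimp only
    rw [find_eq_k hQ.2 hv, bwd_roundtrip_a, bwd_roundtrip_b]
  right_inv := by
    rintro ⟨⟨c, hcp⟩, ⟨d, hdp⟩⟩
    dsimp only
    rw [Prod.mk.injEq]
    constructor <;> apply Subtype.ext <;> dsimp only
    · rw [find_eq_K hcp hs, fwd_roundtrip_c]
    · rw [find_eq_K hcp hs, fwd_roundtrip_d]

lemma card_bset (r s' m m' : ℕ) (hs : s' + 1 ≤ r) (hm' : m' ≤ m) (hmm : s' + m ≤ r + m') :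
    Nat.card (Bset r (s' + 1) m m') = m.choose (r + 1) * m'.choose s' := by
  rw [Nat.card_congr (reflEquiv r s' m m' hs hm' hmm), Nat.card_prod, card_smb, card_smb]

end ReflEquiv

instance (r m m' : ℕ) : IsEmpty (Bset r 0 m m') :=
  ⟨fun x => by obtain ⟨i, hi, _⟩ := x.2.2; omega⟩

lemma glast {l m : ℕ} (hl : 1 ≤ l) {g : Fin l → Fin m} (hg : StrictMono g)
    (hex : ∃ j, (g j : ℕ) + 1 = m) : ∀ j : Fin l, (j : ℕ) = l - 1 → (g j : ℕ) = m - 1 := by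
  obtain ⟨j0, hj0⟩ := hex
  intro j hj
  have h1 : g j0 ≤ g j := hg.monotone (by rw [Fin.le_def]; omega)
  have h2 : (g j : ℕ) < m := (g j).2
  rw [Fin.le_def] at h1
  omega

def yEquiv (r l m : ℕ) (hl : 1 ≤ l) (hlr : l ≤ r) (hrm : r ≤ m) :
    {p : (Fin r → Fin m) × (Fin l → Fin m) //
      (StrictMono p.1 ∧ StrictMono p.2 ∧
        ∀ (i : Fin r) (j : Fin l), (i : ℕ) = (j : ℕ) → p.1 i ≤ p.2 j) ∧
      ∃ j : Fin l, (p.2 j : ℕ) + 1 = m} ≃ Pset r (l - 1) m (m - 1) where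
  toFun x := ⟨(fun i => if h : i < r then (x.1.1 ⟨i, h⟩ : ℕ) else 0,
               fun j => if h : j < l - 1 then (x.1.2 ⟨j, by omega⟩ : ℕ) else 0), by
    obtain ⟨⟨f, g⟩, ⟨hf, hg, hdom⟩, hex⟩ := x
    have hgl := glast hl hg hex
    refine ⟨⟨⟨fun i j hij hj => ?_, fun i hi => ?_, fun i hi => ?_⟩,
      ⟨fun i j hij hj => ?_, fun i hi => ?_, fun i hi => ?_⟩⟩, fun i hi => ?_⟩ <;> dsimp only
    · rw [dif_pos (hij.trans hj), dif_pos hj]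
      exact hf (show (⟨i, hij.trans hj⟩ : Fin r) < ⟨j, hj⟩ from hij)
    · rw [dif_pos hi]; exact (f _).2
    · rw [dif_neg (by omega)]
    · rw [dif_pos (hij.trans hj), dif_pos hj]
      exact hg (show (⟨i, by omega⟩ : Fin l) < ⟨j, by omega⟩ from hij)
    · rw [dif_pos hi]
      have h1 : g ⟨i, by omega⟩ < g ⟨l - 1, by omega⟩ :=
        hg (show (⟨i, by omega⟩ : Fin l) < ⟨l - 1, by omega⟩ from by simp; omega)
      have h2 := hgl ⟨l - 1, by omega⟩ rfl
      rw [Fin.lt_def] at h1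
      omega
    · rw [dif_neg (by omega)]
    · rw [dif_pos hi, dif_pos (by omega : i < r)]
      have := hdom ⟨i, by omega⟩ ⟨i, by omega⟩ rfl
      rwa [Fin.le_def] at this⟩
  invFun y := ⟨(fun i => ⟨y.1.1 i.1, y.2.1.1.2.1 _ i.2⟩,
                fun j => if h : (j : ℕ) < l - 1 then
                    ⟨y.1.2 j.1, by have := y.2.1.2.2.1 j.1 h; omega⟩
                  else ⟨m - 1, by omega⟩), by
    obtain ⟨⟨A, B⟩, ⟨⟨hA, hB⟩, hD⟩⟩ := y
    refine ⟨⟨fun i j hij => ?_, fun j j' hjj => ?_, fun i j hij => ?_⟩, ⟨l - 1, by omega⟩, ?_⟩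
    · rw [Fin.lt_def]
      exact hA.1 i.1 j.1 hij j.2
    · rw [Fin.lt_def] at hjj ⊢
      dsimp only
      by_cases h1 : (j' : ℕ) < l - 1
      · rw [dif_pos (by omega), dif_pos h1]
        exact hB.1 j.1 j'.1 hjj h1
      · rw [dif_neg h1]
        by_cases h2 : (j : ℕ) < l - 1
        · rw [dif_pos h2]
          exact hB.2.1 j.1 h2
        · omega
    · rw [Fin.le_def]
      dsimp only
      rw [hij]
      by_cases h1 : (j : ℕ) < l - 1
      · rw [dif_pos h1]
        have := hD j.1 h1
        dsimp only at this ⊢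
        omega
      · rw [dif_neg h1]
        have := hA.2.1 j.1 (by omega)
        dsimp only at this ⊢
        omega
    · dsimp only
      rw [dif_neg (by simp)]
      dsimp only
      omega⟩
  left_inv := by
    rintro ⟨⟨f, g⟩, ⟨hf, hg, hdom⟩, hex⟩
    have hgl := glast hl hg hex
    apply Subtype.ext
    rw [Prod.mk.injEq]
    constructor <;> funext i <;> apply Fin.ext <;> dsimp only
    · rw [dif_pos i.2]
    · by_cases h : (i : ℕ) < l - 1
      · rw [dif_pos h]
        dsimp only
        rw [dif_pos h]
      · rw [dif_neg h]
        dsimp only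
        exact (hgl i (by omega)).symm
  right_inv := by
    rintro ⟨⟨A, B⟩, ⟨⟨hA, hB⟩, hD⟩⟩
    apply Subtype.ext
    rw [Prod.mk.injEq]
    constructor <;> funext i <;> dsimp only
    · by_cases h : i < r
      · rw [dif_pos h]
      · rw [dif_neg h]
        exact (hA.2.2 i (by omega)).symm
    · by_cases h : i < l - 1
      · rw [dif_pos h, dif_pos (show ((⟨i, by omega⟩ : Fin l) : ℕ) < l - 1 from h)]
      · rw [dif_neg h]
        exact (hB.2.2 i (by omega)).symm

lemma Cz_nat (n k : ℕ) (h : k ≤ n) : Cz (n : ℤ) (k : ℤ) = (n.choose k : ℤ) := by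
  unfold Cz
  rw [if_pos ⟨Int.natCast_nonneg k, by exact_mod_cast h⟩, Int.toNat_natCast, Int.toNat_natCast]

theorem Ycard_max' (r l m : ℕ) (hl : 1 ≤ l) (hlr : l ≤ r) (hrm : r ≤ m) :
    (Ycard r l m m : ℤ) =
      Cz (m : ℤ) ((l : ℤ) - 1) * Cz (m : ℤ) (r : ℤ) -
        Cz ((m : ℤ) - 1) ((l : ℤ) - 2) * Cz ((m : ℤ) + 1) ((r : ℤ) + 1) := by
  have hm1 : 1 ≤ m := le_trans (hl.trans hlr) hrm
  have hY : Ycard r l m m = Nat.card (Pset r (l - 1) m (m - 1)) := by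
    unfold Ycard
    exact Nat.card_congr (yEquiv r l m hl hlr hrm)
  have hsplit := card_split r (l - 1) m (m - 1)
  rw [card_tset] at hsplit
  rcases eq_or_lt_of_le hl with h1 | h1
  · -- l = 1
    have hl1 : l = 1 := h1.symm
    subst hl1
    have hB : Nat.card (Bset r 0 m (m - 1)) = 0 := Nat.card_of_isEmpty
    simp only [Nat.sub_self] at hY hsplit ⊢
    rw [hB, Nat.add_zero, Nat.choose_zero_right, Nat.mul_one] at hsplit
    rw [show ((1 : ℕ) : ℤ) - 1 = ((0 : ℕ) : ℤ) by norm_num,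
      show ((1 : ℕ) : ℤ) - 2 = (-1 : ℤ) by norm_num,
      Cz_nat m 0 (by omega), Cz_nat m r hrm,
      show Cz ((m : ℤ) - 1) (-1) = 0 from by unfold Cz; rw [if_neg (by omega)],
      hY, hsplit]
    simp
  · -- l ≥ 2
    obtain ⟨s', rfl⟩ : ∃ s', l = s' + 2 := ⟨l - 2, by omega⟩
    obtain ⟨m'', rfl⟩ : ∃ m'', m = m'' + 1 := ⟨m - 1, by omega⟩
    have hls : s' + 2 - 1 = s' + 1 := by omega
    have hms : m'' + 1 - 1 = m'' := by omega
    rw [hls, hms] at hY hsplit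
    have hB : Nat.card (Bset r (s' + 1) (m'' + 1) m'') =
        (m'' + 1).choose (r + 1) * m''.choose s' :=
      card_bset r s' (m'' + 1) m'' (by omega) (by omega) (by omega)
    rw [hB] at hsplit
    have e1 : Cz ((m'' + 1 : ℕ) : ℤ) (((s' + 2 : ℕ) : ℤ) - 1) =
        ((m'' + 1).choose (s' + 1) : ℤ) := by
      rw [show (((s' + 2 : ℕ) : ℤ)) - 1 = ((s' + 1 : ℕ) : ℤ) by push_cast; ring]
      exact Cz_nat _ _ (by omega)
    have e2 : Cz ((m'' + 1 : ℕ) : ℤ) ((r : ℕ) : ℤ) = ((m'' + 1).choose r : ℤ) :=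
      Cz_nat _ _ (by omega)
    have e3 : Cz (((m'' + 1 : ℕ) : ℤ) - 1) (((s' + 2 : ℕ) : ℤ) - 2) =
        (m''.choose s' : ℤ) := by
      rw [show (((m'' + 1 : ℕ) : ℤ)) - 1 = ((m'' : ℕ) : ℤ) by push_cast; ring,
        show (((s' + 2 : ℕ) : ℤ)) - 2 = ((s' : ℕ) : ℤ) by push_cast; ring]
      exact Cz_nat _ _ (by omega)
    have e4 : Cz (((m'' + 1 : ℕ) : ℤ) + 1) (((r : ℕ) : ℤ) + 1) =
        ((m'' + 2).choose (r + 1) : ℤ) := by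
      rw [show (((m'' + 1 : ℕ) : ℤ)) + 1 = ((m'' + 2 : ℕ) : ℤ) by push_cast; ring,
        show (((r : ℕ) : ℤ)) + 1 = ((r + 1 : ℕ) : ℤ) by push_cast; ring]
      exact Cz_nat _ _ (by omega)
    rw [e1, e2, e3, e4, hY]
    have p1 : (m'' + 1).choose (s' + 1) = m''.choose s' + m''.choose (s' + 1) :=
      Nat.choose_succ_succ m'' s'
    have p2 : (m'' + 2).choose (r + 1) = (m'' + 1).choose r + (m'' + 1).choose (r + 1) :=
      Nat.choose_succ_succ (m'' + 1) r
    have hsz : (Nat.card (Pset r (s' + 1) (m'' + 1) m'') : ℤ) +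
        ((m'' + 1).choose (r + 1) : ℤ) * (m''.choose s' : ℤ) =
        ((m'' + 1).choose r : ℤ) * (m''.choose (s' + 1) : ℤ) := by
      exact_mod_cast congrArg (Nat.cast : ℕ → ℤ) hsplit
    rw [p1, p2]
    push_cast
    push_cast at hsz
    linarith


/-- `Y_{r,l}^m(m) = C(m, l-1)·C(m, r) − C(m-1, l-2)·C(m+1, r+1)`. -/
theorem Ycard_max (r l m : ℕ) (hl : 1 ≤ l) (hlr : l ≤ r) (hrm : r ≤ m) :
    (Ycard r l m m : ℤ) =
      Cz (m : ℤ) ((l : ℤ) - 1) * Cz (m : ℤ) (r : ℤ) -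
        Cz ((m : ℤ) - 1) ((l : ℤ) - 2) * Cz ((m : ℤ) + 1) ((r : ℤ) + 1) := by
  exact Ycard_max' r l m hl hlr hrm
end

section
/- For l ≤ r and any β with l + m − r ≤ β ≤ m, the count Y_{r,l}^β(m) of two-column SSYTs with column lengths r ≥ l, entries at most m, and containing β in the second column, is independent of β: Y_{r,l}^β(m) = Y_{r,l}^{β'}(m) whenever both β and β' lie in the interval [l+m-r, m]. -/
namespace YcardAux

variable {r l m : ℕ}

/-- The (semi)standardness predicate. -/
def Pred (p : (Fin r → Fin m) × (Fin l → Fin m)) : Prop :=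
  StrictMono p.1 ∧ StrictMono p.2 ∧
    ∀ (i : Fin r) (j : Fin l), (i : ℕ) = (j : ℕ) → p.1 i ≤ p.2 j

/-- Replace every occurrence of `b` in the second column by `b1`. -/
def swp (b b1 : Fin m) (p : (Fin r → Fin m) × (Fin l → Fin m)) :
    (Fin r → Fin m) × (Fin l → Fin m) :=
  (p.1, fun j => if p.2 j = b then b1 else p.2 j)

theorem swp_swp (b b1 : Fin m) (hne : b ≠ b1) (p : (Fin r → Fin m) × (Fin l → Fin m))
    (hno : ∀ j, p.2 j ≠ b1) : swp b1 b (swp b b1 p) = p := by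
  refine Prod.ext rfl (funext fun j => ?_)
  by_cases h : p.2 j = b
  · simp [swp, h, hne.symm]
  · simp [swp, h, hno j]

theorem swp_pred_up (b b1 : Fin m) (hb : (b : ℕ) + 1 = (b1 : ℕ))
    (p : (Fin r → Fin m) × (Fin l → Fin m)) (hP : Pred p)
    (hno : ∀ j, p.2 j ≠ b1) : Pred (swp b b1 p) := by
  obtain ⟨h1, h2, h3⟩ := hP
  refine ⟨h1, ?_, ?_⟩
  · intro j1 j2 hj
    have hm := h2 hj
    have hno2 : (p.2 j2 : ℕ) ≠ (b1 : ℕ) := fun h => hno j2 (Fin.ext h)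
    rw [Fin.lt_def] at hm
    by_cases c1 : p.2 j1 = b <;> by_cases c2 : p.2 j2 = b <;>
      simp only [swp, c1, c2, if_pos, if_neg, if_true, if_false] <;>
      rw [Fin.lt_def] <;>
      first
        | (exfalso; rw [c1, c2] at hm; omega)
        | (rw [c1] at hm; omega)
        | (rw [c2] at hm; omega)
        | omega
  · intro i j hij
    have h4 := h3 i j hij
    by_cases c : p.2 j = b
    · simp only [swp, c, if_true]
      refine le_trans h4 ?_
      rw [c, Fin.le_def]; omega
    · simpa only [swp, c, if_false] using h4

theorem swp_pred_down (b b1 : Fin m) (hb : (b : ℕ) + 1 = (b1 : ℕ))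
    (p : (Fin r → Fin m) × (Fin l → Fin m)) (hP : Pred p)
    (hno : ∀ j, p.2 j ≠ b)
    (hkey : ∀ i : Fin r, (i : ℕ) < l → (p.1 i : ℕ) ≤ (b : ℕ)) :
    Pred (swp b1 b p) := by
  obtain ⟨h1, h2, h3⟩ := hP
  refine ⟨h1, ?_, ?_⟩
  · intro j1 j2 hj
    have hm := h2 hj
    have hno1 : (p.2 j1 : ℕ) ≠ (b : ℕ) := fun h => hno j1 (Fin.ext h)
    rw [Fin.lt_def] at hm
    by_cases c1 : p.2 j1 = b1 <;> by_cases c2 : p.2 j2 = b1 <;>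
      simp only [swp, c1, c2, if_pos, if_neg, if_true, if_false] <;>
      rw [Fin.lt_def] <;>
      first
        | (exfalso; rw [c1, c2] at hm; omega)
        | (rw [c1] at hm; omega)
        | (rw [c2] at hm; omega)
        | omega
  · intro i j hij
    by_cases c : p.2 j = b1
    · simp only [swp, c, if_true]
      rw [Fin.le_def]
      exact hkey i (by rw [hij]; exact j.isLt)
    · simpa only [swp, c, if_false] using h3 i j hij

theorem key_bound (hl : 0 < l) (hlr : l ≤ r) (hrm : r ≤ m) {β : ℕ} (hβ1 : l + m - r ≤ β)
    (p1 : Fin r → Fin m) (h1 : StrictMono p1) (i : Fin r) (hi : (i : ℕ) < l) :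
    (p1 i : ℕ) + 1 ≤ β := by
  have hr : 0 < r := lt_of_lt_of_le hl hlr
  have gap : ∀ d : ℕ, ∀ j : Fin r, (i : ℕ) + d = (j : ℕ) → (p1 i : ℕ) + d ≤ (p1 j : ℕ) := by
    intro d
    induction d with
    | zero =>
      intro j hj
      have : i = j := Fin.ext (by omega)
      simp [this]
    | succ d ih =>
      intro j hj
      have hj' : (i : ℕ) + d < r := by have := j.isLt; omega
      have h2 := ih ⟨(i : ℕ) + d, hj'⟩ rfl
      have h3 : p1 ⟨(i : ℕ) + d, hj'⟩ < p1 j := h1 (by rw [Fin.lt_def]; simp; omega)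
      rw [Fin.lt_def] at h3
      simp at h2 h3
      omega
  have h5 := gap (r - 1 - (i : ℕ)) ⟨r - 1, by omega⟩ (by simp; have := i.isLt; omega)
  have h4 : (p1 ⟨r - 1, by omega⟩ : ℕ) < m := (p1 _).isLt
  have h6 : (i : ℕ) < r := i.isLt
  omega

theorem Ycard_succ (r l m β : ℕ) (hl : 0 < l) (hlr : l ≤ r) (hrm : r ≤ m)
    (hβ1 : l + m - r ≤ β) (hβ2 : β + 1 ≤ m) :
    Ycard r l m β = Ycard r l m (β + 1) := by
  classical
  have hβ0 : 1 ≤ β := by omega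
  set b : Fin m := ⟨β - 1, by omega⟩ with hbdef
  set b1 : Fin m := ⟨β, by omega⟩ with hb1def
  have hb : (b : ℕ) + 1 = (b1 : ℕ) := by simp [hbdef, hb1def]; omega
  have hbne : b ≠ b1 := by
    intro h
    rw [Fin.ext_iff] at h
    simp [hbdef, hb1def] at h
    omega
  have hmem_b : ∀ (c : Fin l → Fin m) (j : Fin l), ((c j : ℕ) + 1 = β) ↔ c j = b := by
    intro c j
    rw [Fin.ext_iff]
    simp [hbdef]
    omega
  have hmem_b1 : ∀ (c : Fin l → Fin m) (j : Fin l), ((c j : ℕ) + 1 = β + 1) ↔ c j = b1 := by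
    intro c j
    rw [Fin.ext_iff]
    simp [hb1def]
  set σ : (Fin r → Fin m) × (Fin l → Fin m) → (Fin r → Fin m) × (Fin l → Fin m) := fun p =>
    if (∃ j, p.2 j = b) ∧ ¬(∃ j, p.2 j = b1) then swp b b1 p
    else if (∃ j, p.2 j = b1) ∧ ¬(∃ j, p.2 j = b) then swp b1 b p
    else p with hσdef
  have swp_no_b : ∀ p : (Fin r → Fin m) × (Fin l → Fin m),
      ∀ j, (swp b b1 p).2 j ≠ b := by
    intro p j
    by_cases h : p.2 j = b
    · simp [swp, h, hbne.symm]
    · simp [swp, h]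
  have swp_no_b1 : ∀ p : (Fin r → Fin m) × (Fin l → Fin m),
      ∀ j, (swp b1 b p).2 j ≠ b1 := by
    intro p j
    by_cases h : p.2 j = b1
    · simp [swp, h, hbne]
    · simp [swp, h]
  have hσσ : Function.Involutive σ := by
    intro p
    by_cases h1 : ∃ j, p.2 j = b <;> by_cases h2 : ∃ j, p.2 j = b1
    · have e : σ p = p := by rw [hσdef]; simp only; rw [if_neg (by tauto), if_neg (by tauto)]
      rw [e, e]
    · have e : σ p = swp b b1 p := by rw [hσdef]; simp only; rw [if_pos ⟨h1, h2⟩]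
      push_neg at h2
      have hA : ∃ j, (swp b b1 p).2 j = b1 := by
        obtain ⟨j, hj⟩ := h1
        exact ⟨j, by simp [swp, hj]⟩
      have hB : ¬∃ j, (swp b b1 p).2 j = b := by
        rintro ⟨j, hj⟩
        exact swp_no_b p j hj
      rw [e]
      have e2 : σ (swp b b1 p) = swp b1 b (swp b b1 p) := by
        rw [hσdef]; simp only; rw [if_neg (by tauto), if_pos ⟨hA, hB⟩]
      rw [e2]
      exact swp_swp b b1 hbne p h2
    · have e : σ p = swp b1 b p := by
        rw [hσdef]; simp only; rw [if_neg (by tauto), if_pos ⟨h2, h1⟩]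
      push_neg at h1
      have hA : ∃ j, (swp b1 b p).2 j = b := by
        obtain ⟨j, hj⟩ := h2
        exact ⟨j, by simp [swp, hj]⟩
      have hB : ¬∃ j, (swp b1 b p).2 j = b1 := by
        rintro ⟨j, hj⟩
        exact swp_no_b1 p j hj
      rw [e]
      have e2 : σ (swp b1 b p) = swp b b1 (swp b1 b p) := by
        rw [hσdef]; simp only; rw [if_pos ⟨hA, hB⟩]
      rw [e2]
      exact swp_swp b1 b hbne.symm p h1
    · have e : σ p = p := by rw [hσdef]; simp only; rw [if_neg (by tauto), if_neg (by tauto)]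
      rw [e, e]
  have L1 : ∀ p, Pred p → (∃ j, p.2 j = b) → Pred (σ p) ∧ ∃ j, (σ p).2 j = b1 := by
    intro p hP h1
    by_cases h2 : ∃ j, p.2 j = b1
    · have e : σ p = p := by rw [hσdef]; simp only; rw [if_neg (by tauto), if_neg (by tauto)]
      rw [e]; exact ⟨hP, h2⟩
    · have e : σ p = swp b b1 p := by rw [hσdef]; simp only; rw [if_pos ⟨h1, h2⟩]
      rw [e]
      push_neg at h2
      refine ⟨swp_pred_up b b1 hb p hP h2, ?_⟩
      obtain ⟨j, hj⟩ := h1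
      exact ⟨j, by simp [swp, hj]⟩
  have L2 : ∀ p, Pred p → (∃ j, p.2 j = b1) → Pred (σ p) ∧ ∃ j, (σ p).2 j = b := by
    intro p hP h2
    by_cases h1 : ∃ j, p.2 j = b
    · have e : σ p = p := by rw [hσdef]; simp only; rw [if_neg (by tauto), if_neg (by tauto)]
      rw [e]; exact ⟨hP, h1⟩
    · have e : σ p = swp b1 b p := by
        rw [hσdef]; simp only; rw [if_neg (by tauto), if_pos ⟨h2, h1⟩]
      rw [e]
      push_neg at h1
      refine ⟨swp_pred_down b b1 hb p hP h1
        (fun i hi => by have := key_bound hl hlr hrm hβ1 p.1 hP.1 i hi; simp [hbdef]; omega), ?_⟩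
      obtain ⟨j, hj⟩ := h2
      exact ⟨j, by simp [swp, hj, hbne]⟩
  rw [Ycard, Ycard]
  refine Nat.card_congr (Equiv.subtypeEquiv hσσ.toPerm ?_)
  intro p
  simp only [Function.Involutive.coe_toPerm]
  constructor
  · rintro ⟨hP, j0, hj0⟩
    obtain ⟨hQ, j1, hj1⟩ := L1 p hP ⟨j0, (hmem_b _ _).mp hj0⟩
    exact ⟨hQ, j1, (hmem_b1 _ _).mpr hj1⟩
  · rintro ⟨hQ, j0, hj0⟩
    obtain ⟨hR, j1, hj1⟩ := L2 (σ p) hQ ⟨j0, (hmem_b1 _ _).mp hj0⟩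
    rw [hσσ p] at hR hj1
    exact ⟨hR, j1, (hmem_b _ _).mpr hj1⟩

end YcardAux

/-- For `l ≤ r` and `l + m − r ≤ β, β' ≤ m`, the count `Y_{r,l}^β(m)` is independent
of `β`. -/
theorem Ycard_const (r l m β β' : ℕ) (hlr : l ≤ r) (hrm : r ≤ m)
    (hβ1 : l + m - r ≤ β) (hβ2 : β ≤ m) (hβ'1 : l + m - r ≤ β') (hβ'2 : β' ≤ m) :
    Ycard r l m β = Ycard r l m β' := by
  rcases Nat.eq_zero_or_pos l with hl | hl
  · subst hl
    have h0 : ∀ γ, Ycard r 0 m γ = 0 := by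
      intro γ
      rw [Ycard]
      haveI : IsEmpty {p : (Fin r → Fin m) × (Fin 0 → Fin m) //
          (StrictMono p.1 ∧ StrictMono p.2 ∧
            ∀ (i : Fin r) (j : Fin 0), (i : ℕ) = (j : ℕ) → p.1 i ≤ p.2 j) ∧
          ∃ j : Fin 0, (p.2 j : ℕ) + 1 = γ} :=
        ⟨fun x => x.2.2.elim fun j _ => j.elim0⟩
      exact Nat.card_of_isEmpty
    rw [h0, h0]
  · have main : ∀ γ d, l + m - r ≤ γ → γ + d ≤ m → Ycard r l m γ = Ycard r l m (γ + d) := by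
      intro γ d h1 h2
      induction d with
      | zero => rfl
      | succ d ih =>
        have h3 : γ + d ≤ m := by omega
        rw [ih h3, show γ + (d + 1) = (γ + d) + 1 from rfl]
        exact YcardAux.Ycard_succ r l m (γ + d) hl hlr hrm (by omega) (by omega)
    rcases le_total β β' with h | h
    · have := main β (β' - β) hβ1 (by omega)
      rwa [show β + (β' - β) = β' by omega] at this
    · have := main β' (β - β') hβ'1 (by omega)
      rw [show β' + (β - β') = β by omega] at this
      exact this.symm
end

section
/- For natural numbers e ≥ f ≥ 1, the identity C(e-1, f-1)² − C(e, f)·C(e-2, f-2) = N_{e-1,f-1} holds, where N_{e,f} = (1/e) C(e, f+1) C(e, f) is the Narayana number. -/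
/-- The Narayana number `N_{e,f} = (1/e) C(e,f+1) C(e,f)` (for `e ≥ 1`;
`N_{0,0} = 1` and `N_{0,f} = 0` for `f ≥ 1`). -/
def Nar (e f : ℕ) : ℚ :=
  if e = 0 then (if f = 0 then 1 else 0)
  else (1 / (e : ℚ)) * (e.choose (f + 1) : ℚ) * (e.choose f : ℚ)

lemma key (k d : ℕ) :
    (((k+d+1).choose (k+1) : ℚ))^2 - ((k+d+2).choose (k+2)) * ((k+d).choose k) =
      (1/((k:ℚ)+d+1)) * ((k+d+1).choose (k+2)) * ((k+d+1).choose (k+1)) := by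
  rcases d with _ | d
  · rw [Nat.choose_eq_zero_of_lt (by omega : k+0+1 < k+2)]
    simp
  · rw [Nat.cast_choose ℚ (by omega : k+1 ≤ k+(d+1)+1),
      Nat.cast_choose ℚ (by omega : k+2 ≤ k+(d+1)+2),
      Nat.cast_choose ℚ (by omega : k ≤ k+(d+1)),
      Nat.cast_choose ℚ (by omega : k+2 ≤ k+(d+1)+1)]
    rw [show k+(d+1)+1-(k+1) = d+1 from by omega,
      show k+(d+1)+2-(k+2) = d+1 from by omega,
      show k+(d+1)-k = d+1 from by omega,
      show k+(d+1)+1-(k+2) = d from by omega]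
    rw [show k+(d+1)+2 = (k+d+2)+1 from by omega,
      show k+(d+1)+1 = (k+d+1)+1 from by omega,
      show k+(d+1) = (k+d)+1 from by omega]
    rw [Nat.factorial_succ (k+d+2), Nat.factorial_succ (k+d+1), Nat.factorial_succ (k+d),
      Nat.factorial_succ (k+1), Nat.factorial_succ k, Nat.factorial_succ d]
    have h1 : (((k+d).factorial) : ℚ) ≠ 0 := Nat.cast_ne_zero.2 (Nat.factorial_ne_zero _)
    have h2 : ((k.factorial) : ℚ) ≠ 0 := Nat.cast_ne_zero.2 (Nat.factorial_ne_zero _)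
    have h3 : ((d.factorial) : ℚ) ≠ 0 := Nat.cast_ne_zero.2 (Nat.factorial_ne_zero _)
    push_cast
    field_simp
    ring

/-- For `e ≥ f ≥ 1`, `C(e-1,f-1)² − C(e,f)·C(e-2,f-2) = N_{e-1,f-1}`. -/
theorem narayana_identity (e f : ℕ) (hf : 1 ≤ f) (hfe : f ≤ e) :
    (((e - 1).choose (f - 1) : ℚ)) ^ 2 -
      ((e.choose f : ℚ)) * (Cz ((e : ℤ) - 2) ((f : ℤ) - 2) : ℚ) =
      Nar (e - 1) (f - 1) := by
  rcases f with _ | _ | k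
  · omega
  · -- f = 1
    obtain ⟨m, rfl⟩ : ∃ m, e = m + 1 := ⟨e - 1, by omega⟩
    have hcz : Cz ((m:ℤ) + 1 - 2) ((1:ℤ) - 2) = 0 := by
      simp [Cz]
    push_cast at hcz ⊢
    rw [show ((m:ℤ)+1-2) = (m:ℤ)+1-2 from rfl] at hcz
    rw [hcz]
    rcases m with _ | m
    · simp [Nar]
    · simp [Nar, Nat.choose_one_right]
      field_simp
  · -- f = k + 2
    obtain ⟨d, rfl⟩ : ∃ d, e = k + d + 2 := ⟨e - k - 2, by omega⟩
    have hcz : Cz ((k+d+2 : ℕ) - 2) ((k+2 : ℕ) - 2) = ((k+d).choose k : ℤ) := by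
      have : ((k+d+2 : ℕ) : ℤ) - 2 = ((k+d : ℕ) : ℤ) := by push_cast; ring
      have h2 : ((k+2 : ℕ) : ℤ) - 2 = ((k : ℕ) : ℤ) := by push_cast; ring
      rw [this, h2]
      rw [Cz, if_pos (by constructor <;> [positivity; exact_mod_cast Nat.le_add_right k d]),
        Int.toNat_natCast, Int.toNat_natCast]
    rw [hcz]
    have hN : Nar (k+d+2-1) (k+2-1) =
        (1/((k:ℚ)+d+1)) * ((k+d+1).choose (k+2)) * ((k+d+1).choose (k+1)) := by
      simp only [show k+d+2-1 = k+d+1 from rfl, show k+2-1 = k+1 from rfl, Nar]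
      simp only [Nat.add_eq, if_neg (by omega : ¬ k+d+1 = 0)]
      push_cast
      ring_nf
    rw [show k+d+2-1 = k+d+1 from rfl, show k+2-1 = k+1 from rfl] at *
    push_cast
    rw [hN]
    exact key k d
end

section
/- For integers n ≥ 2, 1 ≤ s, 1 ≤ t with s + t < n: (t/(n−s−1))·C(n−2, n−s−2)·C(n−1, n−s−t−1) = C(n, s)·C(n, s+t)·(t(n−s)(n−s−t))/(n²(n−1)). -/
open Nat in
private lemma ssyt_aux (x y z A B C D E : ℚ) (hB : B ≠ 0) (hC : C ≠ 0) (hD : D ≠ 0)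
    (hE : E ≠ 0) (h1 : y + z + 1 ≠ 0) (h2 : z + 1 ≠ 0) (h3 : y + z + 2 ≠ 0)
    (h4 : x + y + z + 3 ≠ 0) (h5 : x + y + z + 2 ≠ 0) :
    (y + 1) / (x + y + z + 3 - (x + 1) - 1) * (A / (B * D)) *
        ((x + y + z + 2) * A / (C * E)) =
      (x + y + z + 3) * ((x + y + z + 2) * A) / (D * ((y + z + 2) * ((y + z + 1) * B))) *
          ((x + y + z + 3) * ((x + y + z + 2) * A) / (E * ((z + 1) * C))) *
          ((y + 1) * (x + y + z + 3 - (x + 1)) * (x + y + z + 3 - (x + 1) - (y + 1))) /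
        ((x + y + z + 3) ^ 2 * (x + y + z + 3 - 1)) := by
  rw [show x + y + z + 3 - (x + 1) - 1 = y + z + 1 by ring,
      show x + y + z + 3 - (x + 1) = y + z + 2 by ring,
      show y + z + 2 - (y + 1) = z + 1 by ring,
      show x + y + z + 3 - 1 = x + y + z + 2 by ring]
  field_simp

open Nat in
set_option maxHeartbeats 800000 in
/-- For `n ≥ 2`, `s, t ≥ 1` with `s + t < n`:
`(t/(n−s−1))·C(n−2,n−s−2)·C(n−1,n−s−t−1) = C(n,s)·C(n,s+t)·t(n−s)(n−s−t)/(n²(n−1))`. -/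
theorem ssyt_count_eq_correlation (n s t : ℕ) (hn : 2 ≤ n) (hs : 1 ≤ s) (ht : 1 ≤ t)
    (h : s + t < n) :
    (t : ℚ) / ((n : ℚ) - s - 1) *
        ((n - 2).choose (n - s - 2) : ℚ) * ((n - 1).choose (n - s - t - 1) : ℚ) =
      (n.choose s : ℚ) * (n.choose (s + t) : ℚ) *
        ((t : ℚ) * ((n : ℚ) - s) * ((n : ℚ) - s - t)) / ((n : ℚ) ^ 2 * ((n : ℚ) - 1)) := by
  obtain ⟨a, rfl⟩ : ∃ a, s = a + 1 := ⟨s - 1, by omega⟩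
  obtain ⟨b, rfl⟩ : ∃ b, t = b + 1 := ⟨t - 1, by omega⟩
  obtain ⟨c, rfl⟩ : ∃ c, n = a + b + c + 3 := ⟨n - a - b - 3, by omega⟩
  have e1 : a + b + c + 3 - 2 = a + b + c + 1 := by omega
  have e2 : a + b + c + 3 - (a + 1) - 2 = b + c := by omega
  have e3 : a + b + c + 3 - (a + 1) - (b + 1) - 1 = c := by omega
  have e4 : a + b + c + 3 - 1 = a + b + c + 2 := by omega
  rw [e1, e2, e3, e4]
  rw [Nat.cast_choose ℚ (by omega : b + c ≤ a + b + c + 1),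
      Nat.cast_choose ℚ (by omega : c ≤ a + b + c + 2),
      Nat.cast_choose ℚ (by omega : a + 1 ≤ a + b + c + 3),
      Nat.cast_choose ℚ (by omega : a + 1 + (b + 1) ≤ a + b + c + 3)]
  have f1 : a + b + c + 1 - (b + c) = a + 1 := by omega
  have f2 : a + b + c + 2 - c = a + b + 2 := by omega
  have f3 : a + b + c + 3 - (a + 1) = b + c + 2 := by omega
  have f4 : a + b + c + 3 - (a + 1 + (b + 1)) = c + 1 := by omega
  have f5 : a + 1 + (b + 1) = a + b + 2 := by omega
  rw [f1, f2, f3, f4, f5]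
  have g1 : (a + b + c + 2) ! = (a + b + c + 2) * (a + b + c + 1) ! := by
    rw [show a + b + c + 2 = (a + b + c + 1) + 1 from rfl, Nat.factorial_succ]
  have g2 : (a + b + c + 3) ! = (a + b + c + 3) * ((a + b + c + 2) * (a + b + c + 1) !) := by
    rw [show a + b + c + 3 = (a + b + c + 2) + 1 from rfl, Nat.factorial_succ, g1]
  have g3 : (b + c + 2) ! = (b + c + 2) * ((b + c + 1) * (b + c) !) := by
    rw [show b + c + 2 = (b + c + 1) + 1 from rfl, Nat.factorial_succ,
        show b + c + 1 = (b + c) + 1 from rfl, Nat.factorial_succ]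
  have g4 : (c + 1) ! = (c + 1) * c ! := Nat.factorial_succ c
  rw [g2, g3, g4, g1]
  push_cast
  exact ssyt_aux (a : ℚ) (b : ℚ) (c : ℚ) _ _ _ _ _
    (by positivity) (by positivity) (by positivity) (by positivity)
    (by positivity) (by positivity) (by positivity) (by positivity) (by positivity)
end

section
/- For integers n, i, j, a with 1 ≤ i < n, j = n, and 2 ≤ a ≤ n, the difference (C(n−1, n−i) − C(n−a, n−i))/(n·C(n, i−1)) − (C(n−1, n−i−1) − C(n−a, n−i−1))/(n·C(n, i)) equals 1/n² + ((n−i)·C(i−1, a−2) − C(i−1, a−1))/(a·n·C(n, a)). -/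
lemma F1 (n i : ℕ) (hi : 1 ≤ i) (hin : i < n) :
    (n : ℚ) * ((n - 1).choose (n - i) : ℚ) = ((n : ℚ) - i + 1) * (n.choose (i - 1) : ℚ) := by
  have h1 : (n - 1) - (i - 1) = n - i := by omega
  have h2 : i - 1 ≤ n - 1 := by omega
  have t := Nat.choose_mul_succ_eq (n - 1) (i - 1)
  rw [show n - 1 + 1 = n by omega, show n - (i - 1) = n - i + 1 by omega] at t
  rw [← h1, Nat.choose_symm h2]
  have t' : ((n-1).choose (i-1) * n : ℚ) = (n.choose (i-1) * (n - i + 1) : ℕ) := by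
    exact_mod_cast congrArg (Nat.cast : ℕ → ℚ) t
  push_cast [Nat.cast_sub hin.le] at t'
  linarith

lemma F2 (n i : ℕ) (hi : 1 ≤ i) (hin : i < n) :
    (n : ℚ) * ((n - 1).choose (n - i - 1) : ℚ) = ((n : ℚ) - i) * (n.choose i : ℚ) := by
  have h1 : (n - 1) - i = n - i - 1 := by omega
  have h2 : i ≤ n - 1 := by omega
  have t := Nat.choose_mul_succ_eq (n - 1) i
  rw [show n - 1 + 1 = n by omega] at t
  rw [← h1, Nat.choose_symm h2]
  have t' : ((n-1).choose i * n : ℚ) = (n.choose i * (n - i) : ℕ) := by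
    exact_mod_cast congrArg (Nat.cast : ℕ → ℚ) t
  push_cast [Nat.cast_sub hin.le] at t'
  linarith

lemma F3 (n i a : ℕ) (hi : 1 ≤ i) (hin : i < n) (ha : 2 ≤ a) (han : a ≤ n) :
    (a : ℚ) * (n.choose a : ℚ) * ((n - a).choose (n - i) : ℚ) =
      ((n : ℚ) - i + 1) * ((i - 1).choose (a - 1) : ℚ) * (n.choose (i - 1) : ℚ) := by
  rcases le_or_gt a i with h | h
  · have hs : (n - a) - (i - a) = n - i := by omega
    have hs2 : i - a ≤ n - a := by omega
    rw [← hs, Nat.choose_symm hs2]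
    have t := Nat.choose_mul (n := n) h
    have u := Nat.add_one_mul_choose_eq (i - 1) (a - 1)
    rw [show i - 1 + 1 = i by omega, show a - 1 + 1 = a by omega] at u
    have v := Nat.choose_succ_right_eq n (i - 1)
    rw [show i - 1 + 1 = i by omega, show n - (i - 1) = n - i + 1 by omega] at v
    have t' : ((n.choose i * i.choose a : ℕ) : ℚ) = ((n.choose a * (n-a).choose (i-a) : ℕ) : ℚ) := by
      exact_mod_cast congrArg (Nat.cast : ℕ → ℚ) t
    have u' : ((i * (i-1).choose (a-1) : ℕ) : ℚ) = ((i.choose a * a : ℕ) : ℚ) := by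
      exact_mod_cast congrArg (Nat.cast : ℕ → ℚ) u
    have v' : ((n.choose i * i : ℕ) : ℚ) = ((n.choose (i-1) * (n - i + 1) : ℕ) : ℚ) := by
      exact_mod_cast congrArg (Nat.cast : ℕ → ℚ) v
    push_cast [Nat.cast_sub hin.le] at t' u' v'
    linear_combination (-(a : ℚ)) * t' - (n.choose i : ℚ) * u' + ((i-1).choose (a-1) : ℚ) * v'
  · rw [Nat.choose_eq_zero_of_lt (show n - a < n - i by omega),
      Nat.choose_eq_zero_of_lt (show i - 1 < a - 1 by omega)]
    ring

lemma F4 (n i a : ℕ) (hi : 1 ≤ i) (hin : i < n) (ha : 2 ≤ a) (han : a ≤ n) :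
    (a : ℚ) * (n.choose a : ℚ) * ((n - a).choose (n - i - 1) : ℚ) =
      ((n : ℚ) - i) * (i.choose (a - 1) : ℚ) * (n.choose i : ℚ) := by
  rcases le_or_gt a (i + 1) with h | h
  · have hs : (n - a) - (i + 1 - a) = n - i - 1 := by omega
    have hs2 : i + 1 - a ≤ n - a := by omega
    rw [← hs, Nat.choose_symm hs2]
    have t := Nat.choose_mul (n := n) h
    have u := Nat.add_one_mul_choose_eq i (a - 1)
    rw [show a - 1 + 1 = a by omega] at u
    have v := Nat.choose_succ_right_eq n i
    have t' : ((n.choose (i+1) * (i+1).choose a : ℕ) : ℚ)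
        = ((n.choose a * (n-a).choose (i+1-a) : ℕ) : ℚ) := by
      exact_mod_cast congrArg (Nat.cast : ℕ → ℚ) t
    have u' : (((i+1) * i.choose (a-1) : ℕ) : ℚ) = (((i+1).choose a * a : ℕ) : ℚ) := by
      exact_mod_cast congrArg (Nat.cast : ℕ → ℚ) u
    have v' : ((n.choose (i+1) * (i+1) : ℕ) : ℚ) = ((n.choose i * (n - i) : ℕ) : ℚ) := by
      exact_mod_cast congrArg (Nat.cast : ℕ → ℚ) v
    push_cast [Nat.cast_sub hin.le] at t' u' v'
    linear_combination (-(a : ℚ)) * t' - (n.choose (i+1) : ℚ) * u' + (i.choose (a-1) : ℚ) * v'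
  · rw [Nat.choose_eq_zero_of_lt (show n - a < n - i - 1 by omega),
      Nat.choose_eq_zero_of_lt (show i < a - 1 by omega)]
    ring

lemma Pascal (i a : ℕ) (hi : 1 ≤ i) (ha : 2 ≤ a) :
    (i.choose (a - 1) : ℚ) = ((i - 1).choose (a - 2) : ℚ) + ((i - 1).choose (a - 1) : ℚ) := by
  have := Nat.choose_succ_succ (i - 1) (a - 2)
  simp only [Nat.succ_eq_add_one] at this
  rw [show i - 1 + 1 = i by omega, show a - 2 + 1 = a - 1 by omega] at this
  exact_mod_cast congrArg (Nat.cast : ℕ → ℚ) this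

/-- For `1 ≤ i < n` and `2 ≤ a ≤ n`, the two-point TASEP correlation `E_{n,i}(1,a)`:
`(C(n−1,n−i) − C(n−a,n−i))/(n·C(n,i−1)) − (C(n−1,n−i−1) − C(n−a,n−i−1))/(n·C(n,i))`
equals `1/n² + ((n−i)·C(i−1,a−2) − C(i−1,a−1))/(a·n·C(n,a))`. -/
theorem correlation_En_i (n i a : ℕ) (hi : 1 ≤ i) (hin : i < n) (ha : 2 ≤ a) (han : a ≤ n) :
    (((n - 1).choose (n - i) : ℚ) - ((n - a).choose (n - i) : ℚ)) /
        ((n : ℚ) * (n.choose (i - 1) : ℚ)) -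
      (((n - 1).choose (n - i - 1) : ℚ) - ((n - a).choose (n - i - 1) : ℚ)) /
        ((n : ℚ) * (n.choose i : ℚ)) =
      1 / (n : ℚ) ^ 2 +
        (((n : ℚ) - i) * ((i - 1).choose (a - 2) : ℚ) - ((i - 1).choose (a - 1) : ℚ)) /
          ((a : ℚ) * (n : ℚ) * (n.choose a : ℚ)) := by
  have f1 := F1 n i hi hin
  have f2 := F2 n i hi hin
  have f3 := F3 n i a hi hin ha han
  have f4 := F4 n i a hi hin ha han
  have p := Pascal i a hi ha
  have hN : (n : ℚ) ≠ 0 := Nat.cast_ne_zero.mpr (by omega)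
  have hA : (a : ℚ) ≠ 0 := Nat.cast_ne_zero.mpr (by omega)
  have hb1 : (n.choose (i - 1) : ℚ) ≠ 0 := Nat.cast_ne_zero.mpr (Nat.choose_pos (by omega)).ne'
  have hb2 : (n.choose i : ℚ) ≠ 0 := Nat.cast_ne_zero.mpr (Nat.choose_pos (by omega)).ne'
  have hb3 : (n.choose a : ℚ) ≠ 0 := Nat.cast_ne_zero.mpr (Nat.choose_pos (by omega)).ne'
  field_simp
  linear_combination
    ((a : ℚ) * (n.choose i) * (n.choose a)) * f1
    - ((a : ℚ) * (n.choose (i-1)) * (n.choose a)) * f2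
    - ((n : ℚ) * (n.choose i)) * f3
    + ((n : ℚ) * (n.choose (i-1))) * f4
    + ((n : ℚ) * (n.choose (i-1)) * ((n : ℚ) - i) * (n.choose i)) * p
end

section
/- For integers n ≥ 3 and r, s, t ≥ 1 with r + s + t < n: Σ_{k=r+s+t+1}^{n} Σ_{j=r+s+1}^{r+s+t} Σ_{i=r+1}^{r+s} 6(j−i)(k−i)(k−j) = s·t·(s+t)·(n−r)·(n−r−s)·(n−r−s−t). -/
open Finset

private lemma L1 (r s : ℕ) (j k : ℤ) :
    ∑ i ∈ Finset.Icc (r + 1) (r + s), 6 * (j - (i : ℤ)) * (k - i) * (k - j) =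
      (6 * (s : ℤ) * (j - r) * (k - r) - 3 * s * (s + 1) * (j + k - 2 * r)
        + s * (s + 1) * (2 * s + 1)) * (k - j) := by
  induction s with
  | zero => simp
  | succ s ih =>
    rw [show r + (s + 1) = (r + s) + 1 from rfl,
      Finset.sum_Icc_succ_top (by omega), ih]
    push_cast
    ring

private lemma L2 (r s t : ℕ) (k : ℤ) :
    ∑ j ∈ Finset.Icc (r + s + 1) (r + s + t),
      2 * ((6 * (s : ℤ) * ((j : ℤ) - r) * (k - r) - 3 * s * (s + 1) * ((j : ℤ) + k - 2 * r)
        + s * (s + 1) * (2 * s + 1)) * (k - j)) =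
      6 * (s : ℤ) * t * (t + 1) * (k - r - s) ^ 2
        - s * (s - 1) * (2 * s - 1) * t * (t + 1)
        - 2 * s * t * (t + 1) * (2 * t + 1) * (k - r - s)
        - s * (s - 1) * t * (t + 1) * (2 * t + 1)
        + 6 * s * (s - 1) * t * (k - r - s) ^ 2
        + 2 * s * (s - 1) * (2 * s - 1) * t * (k - r - s) := by
  induction t with
  | zero => simp
  | succ t ih =>
    rw [show r + s + (t + 1) = (r + s + t) + 1 from rfl,
      Finset.sum_Icc_succ_top (by omega), ih]
    push_cast
    ring

private lemma L3 (r s t n : ℕ) (h : r + s + t ≤ n) :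
    ∑ k ∈ Finset.Icc (r + s + t + 1) n,
      (6 * (s : ℤ) * t * (t + 1) * ((k : ℤ) - r - s) ^ 2
        - s * (s - 1) * (2 * s - 1) * t * (t + 1)
        - 2 * s * t * (t + 1) * (2 * t + 1) * ((k : ℤ) - r - s)
        - s * (s - 1) * t * (t + 1) * (2 * t + 1)
        + 6 * s * (s - 1) * t * ((k : ℤ) - r - s) ^ 2
        + 2 * s * (s - 1) * (2 * s - 1) * t * ((k : ℤ) - r - s)) =
      2 * (s : ℤ) * t * (s + t) * ((n : ℤ) - r) * ((n : ℤ) - r - s)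
        * ((n : ℤ) - r - s - t) := by
  induction n, h using Nat.le_induction with
  | base =>
    rw [Finset.Icc_eq_empty (by omega), Finset.sum_empty]
    push_cast
    ring
  | succ n hn ih =>
    rw [Finset.sum_Icc_succ_top (by omega), ih]
    push_cast
    ring

/-- For `n ≥ 3` and `r, s, t ≥ 1` with `r + s + t < n`:
`Σ_{k=r+s+t+1}^{n} Σ_{j=r+s+1}^{r+s+t} Σ_{i=r+1}^{r+s} 6(j−i)(k−i)(k−j)
  = s·t·(s+t)·(n−r)·(n−r−s)·(n−r−s−t)`. -/
theorem triple_sum_identity (n r s t : ℕ) (hn : 3 ≤ n) (hr : 1 ≤ r) (hs : 1 ≤ s)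
    (ht : 1 ≤ t) (h : r + s + t < n) :
    (∑ k ∈ Finset.Icc (r + s + t + 1) n, ∑ j ∈ Finset.Icc (r + s + 1) (r + s + t),
        ∑ i ∈ Finset.Icc (r + 1) (r + s), 6 * (j - i) * (k - i) * (k - j)) =
      s * t * (s + t) * (n - r) * (n - r - s) * (n - r - s - t) := by
  have key : ∑ k ∈ Finset.Icc (r + s + t + 1) n, ∑ j ∈ Finset.Icc (r + s + 1) (r + s + t),
      ∑ i ∈ Finset.Icc (r + 1) (r + s),
        (6 * ((j : ℤ) - i) * ((k : ℤ) - i) * ((k : ℤ) - j)) =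
      (s : ℤ) * t * (s + t) * ((n : ℤ) - r) * ((n : ℤ) - r - s) * ((n : ℤ) - r - s - t) := by
    have h2 : (2 : ℤ) * ∑ k ∈ Finset.Icc (r + s + t + 1) n,
        ∑ j ∈ Finset.Icc (r + s + 1) (r + s + t), ∑ i ∈ Finset.Icc (r + 1) (r + s),
          (6 * ((j : ℤ) - i) * ((k : ℤ) - i) * ((k : ℤ) - j)) =
        2 * ((s : ℤ) * t * (s + t) * ((n : ℤ) - r) * ((n : ℤ) - r - s)
          * ((n : ℤ) - r - s - t)) := by
      rw [Finset.mul_sum]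
      have : ∀ k ∈ Finset.Icc (r + s + t + 1) n,
          (2 : ℤ) * (∑ j ∈ Finset.Icc (r + s + 1) (r + s + t),
            ∑ i ∈ Finset.Icc (r + 1) (r + s),
              (6 * ((j : ℤ) - i) * ((k : ℤ) - i) * ((k : ℤ) - j))) =
          6 * (s : ℤ) * t * (t + 1) * ((k : ℤ) - r - s) ^ 2
            - s * (s - 1) * (2 * s - 1) * t * (t + 1)
            - 2 * s * t * (t + 1) * (2 * t + 1) * ((k : ℤ) - r - s)
            - s * (s - 1) * t * (t + 1) * (2 * t + 1)
            + 6 * s * (s - 1) * t * ((k : ℤ) - r - s) ^ 2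
            + 2 * s * (s - 1) * (2 * s - 1) * t * ((k : ℤ) - r - s) := by
        intro k _
        rw [Finset.mul_sum, ← L2 r s t (k : ℤ)]
        refine Finset.sum_congr rfl fun j _ => ?_
        rw [L1 r s (j : ℤ) (k : ℤ)]
      rw [Finset.sum_congr rfl this, L3 r s t n (by omega)]
      ring
    exact mul_left_cancel₀ (by norm_num : (2 : ℤ) ≠ 0) h2
  have cast_eq : ((∑ k ∈ Finset.Icc (r + s + t + 1) n,
      ∑ j ∈ Finset.Icc (r + s + 1) (r + s + t), ∑ i ∈ Finset.Icc (r + 1) (r + s),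
        6 * (j - i) * (k - i) * (k - j) : ℕ) : ℤ) =
      ∑ k ∈ Finset.Icc (r + s + t + 1) n, ∑ j ∈ Finset.Icc (r + s + 1) (r + s + t),
        ∑ i ∈ Finset.Icc (r + 1) (r + s),
          (6 * ((j : ℤ) - i) * ((k : ℤ) - i) * ((k : ℤ) - j)) := by
    rw [Nat.cast_sum]
    refine Finset.sum_congr rfl fun k hk => ?_
    rw [Nat.cast_sum]
    refine Finset.sum_congr rfl fun j hj => ?_
    rw [Nat.cast_sum]
    refine Finset.sum_congr rfl fun i hi => ?_
    simp only [Finset.mem_Icc] at hk hj hi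
    have h1 : i ≤ j := by omega
    have h2 : i ≤ k := by omega
    have h3 : j ≤ k := by omega
    push_cast [Nat.cast_sub h1, Nat.cast_sub h2, Nat.cast_sub h3]
    ring
  have hrn : r ≤ n := by omega
  have hrsn : r + s ≤ n := by omega
  have hrstn : r + s + t ≤ n := by omega
  have : ((s * t * (s + t) * (n - r) * (n - r - s) * (n - r - s - t) : ℕ) : ℤ) =
      (s : ℤ) * t * (s + t) * ((n : ℤ) - r) * ((n : ℤ) - r - s) * ((n : ℤ) - r - s - t) := by
    rw [Nat.cast_mul, Nat.cast_mul, Nat.cast_mul, Nat.cast_mul, Nat.cast_mul,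
      Nat.cast_sub hrn, Nat.cast_sub (show s ≤ n - r by omega),
      Nat.cast_sub (show t ≤ n - r - s by omega), Nat.cast_sub hrn,
      Nat.cast_sub (show s ≤ n - r by omega), Nat.cast_sub hrn]
    push_cast
    ring
  have := cast_eq.trans (key.trans this.symm)
  exact_mod_cast this
end

section
/- For integers n ≥ 3 and r, s, t ≥ 1 with r+s+t < n: SSYT_{n−r−3, n−r−s−2, n−r−s−t−1}(n−3) / (C(n,r)·C(n,r+s)·C(n,r+s+t)) = s·t·(s+t)·(n−r)·(n−r−s)·(n−r−s−t) / (n³(n−1)²(n−2)), where SSYT_{a,b,c}(m) = ((a−b+1)(a−c+2)(b−c+1))/((a+1)(a+2)(b+1))·C(m,a)·C(m+1,b)·C(m+2,c). -/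
/-- The hook-content formula
`SSYT_{a,b,c}(m) = ((a−b+1)(a−c+2)(b−c+1))/((a+1)(a+2)(b+1))·C(m,a)·C(m+1,b)·C(m+2,c)`. -/
def ssytF3 (a b c m : ℕ) : ℚ :=
  (((a - b + 1) * (a - c + 2) * (b - c + 1) : ℕ) : ℚ) /
      (((a + 1) * (a + 2) * (b + 1) : ℕ) : ℚ) *
    (m.choose a : ℚ) * ((m + 1).choose b : ℚ) * ((m + 2).choose c : ℚ)

lemma aux1 (R S T U : ℕ) :
    ((R + S + T + U + 1).choose (S + T + U) : ℚ) =
      (((S + T + U + 3) * (S + T + U + 2) * (S + T + U + 1) : ℕ) : ℚ) /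
        (((R + S + T + U + 4) * (R + S + T + U + 3) * (R + S + T + U + 2) : ℕ) : ℚ) *
      ((R + S + T + U + 4).choose (R + 1) : ℚ) := by
  rw [Nat.cast_choose ℚ (show S + T + U ≤ R + S + T + U + 1 by omega),
      Nat.cast_choose ℚ (show R + 1 ≤ R + S + T + U + 4 by omega),
      show R + S + T + U + 1 - (S + T + U) = R + 1 by omega,
      show R + S + T + U + 4 - (R + 1) = S + T + U + 3 by omega]
  rw [show R + S + T + U + 4 = (R + S + T + U + 3) + 1 by ring, Nat.factorial_succ (R+S+T+U+3),
      show R + S + T + U + 3 = (R + S + T + U + 2) + 1 by ring, Nat.factorial_succ (R+S+T+U+2),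
      show R + S + T + U + 2 = (R + S + T + U + 1) + 1 by ring, Nat.factorial_succ (R+S+T+U+1),
      show S + T + U + 3 = (S + T + U + 2) + 1 by ring, Nat.factorial_succ (S+T+U+2),
      show S + T + U + 2 = (S + T + U + 1) + 1 by ring, Nat.factorial_succ (S+T+U+1),
      show S + T + U + 1 = (S + T + U) + 1 by ring, Nat.factorial_succ (S+T+U)]
  have hf : ∀ k : ℕ, ((k.factorial : ℚ)) ≠ 0 := fun k => Nat.cast_ne_zero.mpr k.factorial_ne_zero
  push_cast
  have h1 : ((R:ℚ) + S + T + U) + 1 + 1 + 1 ≠ 0 := by positivity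
  have h2 : ((R:ℚ) + S + T + U) + 1 + 1 ≠ 0 := by positivity
  have h3 : ((R:ℚ) + S + T + U) + 1 ≠ 0 := by positivity
  field_simp

lemma aux2 (R S T U : ℕ) :
    ((R + S + T + U + 2).choose (T + U) : ℚ) =
      (((T + U + 2) * (T + U + 1) : ℕ) : ℚ) /
        (((R + S + T + U + 4) * (R + S + T + U + 3) : ℕ) : ℚ) *
      ((R + S + T + U + 4).choose (R + S + 2) : ℚ) := by
  rw [Nat.cast_choose ℚ (show T + U ≤ R + S + T + U + 2 by omega),
      Nat.cast_choose ℚ (show R + S + 2 ≤ R + S + T + U + 4 by omega),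
      show R + S + T + U + 2 - (T + U) = R + S + 2 by omega,
      show R + S + T + U + 4 - (R + S + 2) = T + U + 2 by omega]
  rw [show R + S + T + U + 4 = (R + S + T + U + 3) + 1 by ring, Nat.factorial_succ (R+S+T+U+3),
      show R + S + T + U + 3 = (R + S + T + U + 2) + 1 by ring, Nat.factorial_succ (R+S+T+U+2),
      show T + U + 2 = (T + U + 1) + 1 by ring, Nat.factorial_succ (T+U+1),
      show T + U + 1 = (T + U) + 1 by ring, Nat.factorial_succ (T+U)]
  have hf : ∀ k : ℕ, ((k.factorial : ℚ)) ≠ 0 := fun k => Nat.cast_ne_zero.mpr k.factorial_ne_zero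
  push_cast
  have h1 : ((R:ℚ) + S + T + U) + 2 + 1 + 1 ≠ 0 := by positivity
  have h2 : ((R:ℚ) + S + T + U) + 2 + 1 ≠ 0 := by positivity
  field_simp

lemma aux3 (R S T U : ℕ) :
    ((R + S + T + U + 3).choose U : ℚ) =
      (((U + 1) : ℕ) : ℚ) / (((R + S + T + U + 4) : ℕ) : ℚ) *
      ((R + S + T + U + 4).choose (R + S + T + 3) : ℚ) := by
  rw [Nat.cast_choose ℚ (show U ≤ R + S + T + U + 3 by omega),
      Nat.cast_choose ℚ (show R + S + T + 3 ≤ R + S + T + U + 4 by omega),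
      show R + S + T + U + 3 - U = R + S + T + 3 by omega,
      show R + S + T + U + 4 - (R + S + T + 3) = U + 1 by omega]
  rw [show R + S + T + U + 4 = (R + S + T + U + 3) + 1 by ring, Nat.factorial_succ (R+S+T+U+3),
      Nat.factorial_succ U]
  have hf : ∀ k : ℕ, ((k.factorial : ℚ)) ≠ 0 := fun k => Nat.cast_ne_zero.mpr k.factorial_ne_zero
  push_cast
  have h1 : ((R:ℚ) + S + T + U) + 3 + 1 ≠ 0 := by positivity
  field_simp

/-- For `n ≥ 3` and `r, s, t ≥ 1` with `r+s+t < n`: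
`SSYT_{n−r−3, n−r−s−2, n−r−s−t−1}(n−3) / (C(n,r)·C(n,r+s)·C(n,r+s+t))
  = s·t·(s+t)·(n−r)·(n−r−s)·(n−r−s−t) / (n³(n−1)²(n−2))`. -/
theorem ssyt3_correlation (n r s t : ℕ) (hn : 3 ≤ n) (hr : 1 ≤ r) (hs : 1 ≤ s)
    (ht : 1 ≤ t) (h : r + s + t < n) :
    ssytF3 (n - r - 3) (n - r - s - 2) (n - r - s - t - 1) (n - 3) /
        ((n.choose r : ℚ) * (n.choose (r + s) : ℚ) * (n.choose (r + s + t) : ℚ)) =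
      ((s * t * (s + t) * (n - r) * (n - r - s) * (n - r - s - t) : ℕ) : ℚ) /
        ((n : ℚ) ^ 3 * ((n : ℚ) - 1) ^ 2 * ((n : ℚ) - 2)) := by
  obtain ⟨R, rfl⟩ : ∃ R, r = R + 1 := ⟨r - 1, by omega⟩
  obtain ⟨S, rfl⟩ : ∃ S, s = S + 1 := ⟨s - 1, by omega⟩
  obtain ⟨T, rfl⟩ : ∃ T, t = T + 1 := ⟨t - 1, by omega⟩
  obtain ⟨U, rfl⟩ : ∃ U, n = R + S + T + U + 4 := ⟨n - R - S - T - 4, by omega⟩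
  clear hn hr hs ht h
  rw [show R + S + T + U + 4 - (R + 1) - 3 = S + T + U by omega,
      show R + S + T + U + 4 - (R + 1) - (S + 1) - 2 = T + U by omega,
      show R + S + T + U + 4 - (R + 1) - (S + 1) - (T + 1) - 1 = U by omega,
      show R + S + T + U + 4 - 3 = R + S + T + U + 1 by omega,
      show R + S + T + U + 4 - (R + 1) = S + T + U + 3 by omega,
      show S + T + U + 3 - (S + 1) = T + U + 2 by omega,
      show T + U + 2 - (T + 1) = U + 1 by omega, ssytF3,
      show S + T + U - (T + U) = S by omega,
      show S + T + U - U = S + T by omega,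
      show T + U - U = T by omega,
      show R + S + T + U + 1 + 1 = R + S + T + U + 2 by ring,
      show R + S + T + U + 1 + 2 = R + S + T + U + 3 by ring,
      show R + 1 + (S + 1) = R + S + 2 by ring,
      show R + S + 2 + (T + 1) = R + S + T + 3 by ring,
      aux1 R S T U, aux2 R S T U, aux3 R S T U]
  have c1 : ((R + S + T + U + 4).choose (R + 1) : ℚ) ≠ 0 :=
    Nat.cast_ne_zero.mpr (Nat.choose_pos (by omega)).ne'
  have c2 : ((R + S + T + U + 4).choose (R + S + 2) : ℚ) ≠ 0 :=
    Nat.cast_ne_zero.mpr (Nat.choose_pos (by omega)).ne'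
  have c3 : ((R + S + T + U + 4).choose (R + S + T + 3) : ℚ) ≠ 0 :=
    Nat.cast_ne_zero.mpr (Nat.choose_pos (by omega)).ne'
  push_cast
  rw [show ((R:ℚ) + S + T + U + 4 - 1) = (R:ℚ) + S + T + U + 3 by ring,
      show ((R:ℚ) + S + T + U + 4 - 2) = (R:ℚ) + S + T + U + 2 by ring,
      show ((S:ℚ) + 1 + ((T:ℚ) + 1)) = (S:ℚ) + T + 2 by ring]
  have h1 : ((R:ℚ) + S + T + U + 4) ≠ 0 := by positivity
  have h2 : ((R:ℚ) + S + T + U + 3) ≠ 0 := by positivity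
  have h3 : ((R:ℚ) + S + T + U + 2) ≠ 0 := by positivity
  have h4 : ((S:ℚ) + T + U + 1) ≠ 0 := by positivity
  have h5 : ((S:ℚ) + T + U + 2) ≠ 0 := by positivity
  have h6 : ((S:ℚ) + T + U + 3) ≠ 0 := by positivity
  have h7 : ((T:ℚ) + U + 1) ≠ 0 := by positivity
  have h8 : ((T:ℚ) + U + 2) ≠ 0 := by positivity
  have h9 : ((U:ℚ) + 1) ≠ 0 := by positivity
  generalize ((R + S + T + U + 4).choose (R + 1) : ℚ) = x at c1 ⊢
  generalize ((R + S + T + U + 4).choose (R + S + 2) : ℚ) = y at c2 ⊢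
  generalize ((R + S + T + U + 4).choose (R + S + T + 3) : ℚ) = z at c3 ⊢
  generalize hN1 : ((R:ℚ) + S + T + U + 4) = n1 at h1 ⊢
  generalize hN2 : ((R:ℚ) + S + T + U + 3) = n2 at h2 ⊢
  generalize hN3 : ((R:ℚ) + S + T + U + 2) = n3 at h3 ⊢
  generalize hA1 : ((S:ℚ) + T + U + 1) = a1 at h4 ⊢
  generalize hA2 : ((S:ℚ) + T + U + 2) = a2 at h5 ⊢
  generalize hA3 : ((S:ℚ) + T + U + 3) = a3 at h6 ⊢
  generalize hB1 : ((T:ℚ) + U + 1) = b1 at h7 ⊢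
  generalize hB2 : ((T:ℚ) + U + 2) = b2 at h8 ⊢
  generalize hC1 : ((U:ℚ) + 1) = c at h9 ⊢
  field_simp
end
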